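/- arXiv:2309.01936 — 5 statements merged into one kernel-verified Lean document; each statement's English description precedes it below -/
import Mathlib

section
/- Let ρ be a positive random variable with continuous strictly increasing CDF F on [0,∞), F(0)=0, E[ρ]<∞, and α∈(0,1). Define ζ(λ) = [∫_{1-F(λ/α)}^1 F^{-1}(1-z) dz] / [α-1+F(λ/α)] for λ ∈ (αF^{-1}(1-α), ∞). Then ζ attains its unique minimum at λ̂, the unique root of η(λ) = -∫_{1-F(λ/α)}^1 F^{-1}(1-y)dy + λ(α-1+F(λ/α))/α, and the minimum value is ζ(λ̂) = λ̂/α. -/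
open Set MeasureTheory intervalIntegral Filter

lemma aux_key {F Finv : ℝ → ℝ} (hFcont : Continuous F)
    (hFmono : StrictMonoOn F (Set.Ici 0)) (hF0 : F 0 = 0)
    (hFinv' : ∀ x ≥ (0:ℝ), Finv (F x) = x) :
    ∀ p X : ℝ, 0 < p → 0 ≤ X → p ≤ F X →
      0 < Finv p ∧ Finv p ≤ X ∧ F (Finv p) = p := by
  intro p X hp hX hpX
  obtain ⟨t, ht, hFt⟩ := intermediate_value_Icc hX hFcont.continuousOn
    (⟨by rw [hF0]; exact hp.le, hpX⟩ : p ∈ Set.Icc (F 0) (F X))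
  have hFinvp : Finv p = t := by rw [← hFt, hFinv' t ht.1]
  have ht0 : 0 < t := by
    rcases lt_or_eq_of_le ht.1 with h | h
    · exact h
    · exfalso; rw [← h, hF0] at hFt; exact hp.ne' hFt.symm
  refine ⟨?_, ?_, ?_⟩ <;> rw [hFinvp]
  · exact ht0
  · exact ht.2
  · exact hFt

lemma aux_le {F Finv : ℝ → ℝ} (hFcont : Continuous F)
    (hFmono : StrictMonoOn F (Set.Ici 0)) (hF0 : F 0 = 0)
    (hFinv' : ∀ x ≥ (0:ℝ), Finv (F x) = x) :
    ∀ p p' X : ℝ, 0 < p → p ≤ p' → 0 ≤ X → p' ≤ F X →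
      Finv p ≤ Finv p' := by
  intro p p' X hp hpp hX hp'X
  obtain ⟨h1, h2, h3⟩ := aux_key hFcont hFmono hF0 hFinv' p X hp hX (hpp.trans hp'X)
  obtain ⟨h1', h2', h3'⟩ := aux_key hFcont hFmono hF0 hFinv' p' X (hp.trans_le hpp) hX hp'X
  by_contra hcon
  push_neg at hcon
  have := hFmono h1'.le (mem_Ici.mpr h1.le) hcon
  rw [h3, h3'] at this
  linarith

lemma aux_anti {F Finv : ℝ → ℝ} (hFcont : Continuous F)
    (hFmono : StrictMonoOn F (Set.Ici 0)) (hF0 : F 0 = 0)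
    (hFinv' : ∀ x ≥ (0:ℝ), Finv (F x) = x) (hFinv0 : Finv 0 = 0)
    (X : ℝ) (hX : 0 ≤ X) :
    AntitoneOn (fun z => Finv (1 - z)) (Set.Icc (1 - F X) 1) := by
  intro z1 hz1 z2 hz2 h12
  have hz1F : 1 - z1 ≤ F X := by linarith [hz1.1]
  rcases eq_or_lt_of_le hz2.2 with h | h
  · simp only [h, sub_self, hFinv0]
    rcases eq_or_lt_of_le hz1.2 with h' | h'
    · simp [h', hFinv0]
    · exact (aux_key hFcont hFmono hF0 hFinv' (1 - z1) X (by linarith) hX hz1F).1.le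
  · exact aux_le hFcont hFmono hF0 hFinv' (1 - z2) (1 - z1) X (by linarith)
      (by linarith) hX hz1F
/-- ζ(λ) = ∫_{1-F(λ/α)}^1 F⁻¹(1-z)dz / (α-1+F(λ/α)) attains its unique
minimum on (αF⁻¹(1-α),∞) at λ̂, the unique root of η, with minimum value λ̂/α. -/
theorem stmt_3 (F Finv : ℝ → ℝ) (α : ℝ) (hα : α ∈ Set.Ioo (0:ℝ) 1)
    (hFcont : Continuous F) (hFdiff : Differentiable ℝ F)
    (hFmono : StrictMonoOn F (Set.Ici 0)) (hF0 : F 0 = 0)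
    (hFinv : ∀ p ∈ Set.Icc (0:ℝ) 1, F (Finv p) = p)
    (hFinv' : ∀ x ≥ (0:ℝ), Finv (F x) = x)
    (hmean : IntervalIntegrable (fun y => Finv (1 - y)) MeasureTheory.volume 0 1)
    (η ζ : ℝ → ℝ)
    (hη : ∀ lam : ℝ, η lam =
      -(∫ y in (1 - F (lam / α))..1, Finv (1 - y)) + lam * (α - 1 + F (lam / α)) / α)
    (hζ : ∀ lam : ℝ, ζ lam =
      (∫ z in (1 - F (lam / α))..1, Finv (1 - z)) / (α - 1 + F (lam / α)))
    (lamhat : ℝ) (hlamhat_pos : 0 < lamhat) (hroot : η lamhat = 0)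
    (huniq : ∀ lam > (0:ℝ), η lam = 0 → lam = lamhat)
    (hrange : α * Finv (1 - α) < lamhat) :
    ζ lamhat = lamhat / α ∧
    ∀ lam ∈ Set.Ioi (α * Finv (1 - α)), lam ≠ lamhat → ζ lamhat < ζ lam := by
  obtain ⟨hα0, hα1⟩ := hα
  have key := aux_key (F := F) (Finv := Finv) hFcont hFmono hF0 hFinv'
  have fle := aux_le (F := F) (Finv := Finv) hFcont hFmono hF0 hFinv'
  have hFinv0 : Finv 0 = 0 := by have := hFinv' 0 le_rfl; rwa [hF0] at this
  have anti := aux_anti (F := F) (Finv := Finv) hFcont hFmono hF0 hFinv' hFinv0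
  have integrable_on : ∀ X a b : ℝ, 0 ≤ X → 1 - F X ≤ a → a ≤ b → b ≤ 1 →
      IntervalIntegrable (fun z => Finv (1 - z)) volume a b := by
    intro X a b hX h1 h2 h3
    apply AntitoneOn.intervalIntegrable
    apply (anti X hX).mono
    rw [uIcc_of_le h2]
    exact Icc_subset_Icc h1 h3
  have hlha : 0 < lamhat / α := div_pos hlamhat_pos hα0
  have huh_pos : 0 < F (lamhat / α) := by
    have := hFmono (le_refl (0:ℝ)) (mem_Ici.mpr hlha.le) hlha
    rwa [hF0] at this
  have hGh0 : ∫ z in (1 - F (lamhat / α))..1, Finv (1 - z)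
      = lamhat * (α - 1 + F (lamhat / α)) / α := by
    have h0 := hroot; rw [hη] at h0; linarith
  -- positivity of denominator at lamhat
  have hDh : 0 < α - 1 + F (lamhat / α) := by
    by_contra hcon
    push_neg at hcon
    set c := 1 - F (lamhat / α) with hc
    have hc1 : c < 1 := by rw [hc]; linarith
    set m := (c + 1) / 2 with hm
    have hcm : c < m := by rw [hm]; linarith
    have hm1 : m < 1 := by rw [hm]; linarith
    have hint1 := integrable_on (lamhat / α) c m hlha.le le_rfl hcm.le hm1.le
    have hint2 := integrable_on (lamhat / α) m 1 hlha.le (by linarith) hm1.le le_rfl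
    have hpm1 : (0:ℝ) < 1 - m := by linarith
    have hpm2 : 1 - m ≤ F (lamhat / α) := by rw [hm, hc]; linarith
    obtain ⟨hp1, hp2, hp3⟩ := key (1 - m) (lamhat / α) hpm1 hlha.le hpm2
    have hlow : (m - c) * Finv (1 - m) ≤ ∫ z in c..m, Finv (1 - z) := by
      have hb : ∀ z ∈ Set.Icc c m, Finv (1 - m) ≤ Finv (1 - z) := by
        intro z hz
        exact fle (1 - m) (1 - z) (lamhat / α) hpm1 (by linarith [hz.2]) hlha.le
          (by have := hz.1; rw [hc] at this; linarith)
      have := intervalIntegral.integral_mono_on hcm.le intervalIntegrable_const hint1 hb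
      simpa [smul_eq_mul] using this
    have hge2 : 0 ≤ ∫ z in m..1, Finv (1 - z) := by
      apply intervalIntegral.integral_nonneg hm1.le
      intro z hz
      rcases eq_or_lt_of_le hz.2 with h | h
      · simp [h, hFinv0]
      · exact (key (1 - z) (lamhat / α) (by linarith) hlha.le
          (by have := hz.1; rw [hc] at *; linarith)).1.le
    have hsplit := intervalIntegral.integral_add_adjacent_intervals hint1 hint2
    have hpos : 0 < ∫ z in c..1, Finv (1 - z) := by
      rw [← hsplit]
      nlinarith [mul_pos (by linarith : (0:ℝ) < m - c) hp1]
    rw [hGh0] at hpos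
    have : lamhat * (α - 1 + F (lamhat / α)) ≤ 0 :=
      mul_nonpos_of_nonneg_of_nonpos hlamhat_pos.le hcon
    have := div_nonpos_of_nonpos_of_nonneg this hα0.le
    linarith
  -- Finv (1 - α) facts
  have h1a : (0:ℝ) < 1 - α := by linarith
  obtain ⟨hq_pos, hq_le, hqF⟩ := key (1 - α) (lamhat / α) h1a hlha.le (by linarith)
  have part1 : ζ lamhat = lamhat / α := by
    rw [hζ, hGh0]
    field_simp
  refine ⟨part1, ?_⟩
  intro lam hlam hne
  rw [mem_Ioi] at hlam
  have hlam_pos : 0 < lam := (mul_pos hα0 hq_pos).trans hlam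
  have hlao : 0 < lam / α := div_pos hlam_pos hα0
  have hla : Finv (1 - α) < lam / α :=
    (lt_div_iff₀ hα0).mpr (by linarith [mul_comm α (Finv (1 - α))])
  have hFla : 1 - α < F (lam / α) := by
    have := hFmono (mem_Ici.mpr hq_pos.le) (mem_Ici.mpr hlao.le) hla
    rwa [hqF] at this
  have hDl : 0 < α - 1 + F (lam / α) := by linarith
  rw [part1, hζ, lt_div_iff₀ hDl]
  rcases lt_or_gt_of_ne hne with hlt | hgt
  · -- case lam < lamhat
    set μ := (lam + lamhat) / 2 with hμ
    have hμ1 : lam < μ := by rw [hμ]; linarith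
    have hμ2 : μ < lamhat := by rw [hμ]; linarith
    have hμa : 0 < μ / α := div_pos (by linarith) hα0
    have hF1 : F (lam / α) < F (μ / α) :=
      hFmono (mem_Ici.mpr hlao.le) (mem_Ici.mpr hμa.le) ((div_lt_div_iff_of_pos_right hα0).mpr hμ1)
    have hF2 : F (μ / α) < F (lamhat / α) :=
      hFmono (mem_Ici.mpr hμa.le) (mem_Ici.mpr hlha.le) ((div_lt_div_iff_of_pos_right hα0).mpr hμ2)
    set ch := 1 - F (lamhat / α) with hch
    set cm := 1 - F (μ / α) with hcm
    set cl := 1 - F (lam / α) with hcl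
    have ho1 : ch < cm := by rw [hch, hcm]; linarith
    have ho2 : cm < cl := by rw [hcm, hcl]; linarith
    have ho3 : cl < 1 := by rw [hcl]; linarith
    have hintA := integrable_on (lamhat / α) ch cm hlha.le (le_of_eq hch.symm) ho1.le (by linarith)
    have hintB := integrable_on (lamhat / α) cm cl hlha.le (by rw [hch] at *; linarith) ho2.le ho3.le
    have hintC := integrable_on (lamhat / α) cl 1 hlha.le (by rw [hch] at *; linarith) ho3.le le_rfl
    have hup1 : ∫ z in ch..cm, Finv (1 - z) ≤ (cm - ch) * (lamhat / α) := by
      have hb : ∀ z ∈ Set.Icc ch cm, Finv (1 - z) ≤ lamhat / α := by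
        intro z hz
        have h1 : 0 < 1 - z := by linarith [hz.2]
        have h2 : 1 - z ≤ F (lamhat / α) := by have := hz.1; rw [hch] at this; linarith
        calc Finv (1 - z) ≤ Finv (F (lamhat / α)) :=
              fle (1 - z) (F (lamhat / α)) (lamhat / α) h1 h2 hlha.le le_rfl
          _ = lamhat / α := hFinv' _ hlha.le
      have := intervalIntegral.integral_mono_on ho1.le hintA intervalIntegrable_const hb
      rwa [intervalIntegral.integral_const, smul_eq_mul] at this
    have hup2 : ∫ z in cm..cl, Finv (1 - z) ≤ (cl - cm) * (μ / α) := by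
      have hb : ∀ z ∈ Set.Icc cm cl, Finv (1 - z) ≤ μ / α := by
        intro z hz
        have h1 : 0 < 1 - z := by linarith [hz.2]
        have h2 : 1 - z ≤ F (μ / α) := by have := hz.1; rw [hcm] at this; linarith
        calc Finv (1 - z) ≤ Finv (F (μ / α)) :=
              fle (1 - z) (F (μ / α)) (μ / α) h1 h2 hμa.le le_rfl
          _ = μ / α := hFinv' _ hμa.le
      have := intervalIntegral.integral_mono_on ho2.le hintB intervalIntegrable_const hb
      rwa [intervalIntegral.integral_const, smul_eq_mul] at this
    have hsplit1 := intervalIntegral.integral_add_adjacent_intervals hintA hintB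
    have hsplit2 := intervalIntegral.integral_add_adjacent_intervals (hintA.trans hintB) hintC
    have hkey : (cl - cm) * (μ / α) < (cl - cm) * (lamhat / α) :=
      mul_lt_mul_of_pos_left ((div_lt_div_iff_of_pos_right hα0).mpr hμ2) (by linarith)
    have e1 : lamhat * (α - 1 + F (lamhat / α)) / α - (cm - ch) * (lamhat / α)
        - (cl - cm) * (lamhat / α) = lamhat / α * (α - 1 + F (lam / α)) := by
      rw [hch, hcm, hcl]; field_simp; ring
    linarith
  · -- case lamhat < lam
    set μ := (lamhat + lam) / 2 with hμ
    have hμ1 : lamhat < μ := by rw [hμ]; linarith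
    have hμ2 : μ < lam := by rw [hμ]; linarith
    have hμa : 0 < μ / α := div_pos (by linarith) hα0
    have hF1 : F (lamhat / α) < F (μ / α) :=
      hFmono (mem_Ici.mpr hlha.le) (mem_Ici.mpr hμa.le) ((div_lt_div_iff_of_pos_right hα0).mpr hμ1)
    have hF2 : F (μ / α) < F (lam / α) :=
      hFmono (mem_Ici.mpr hμa.le) (mem_Ici.mpr hlao.le) ((div_lt_div_iff_of_pos_right hα0).mpr hμ2)
    set ch := 1 - F (lamhat / α) with hch
    set cm := 1 - F (μ / α) with hcm
    set cl := 1 - F (lam / α) with hcl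
    have ho1 : cl < cm := by rw [hcl, hcm]; linarith
    have ho2 : cm < ch := by rw [hcm, hch]; linarith
    have ho3 : ch < 1 := by rw [hch]; linarith
    have hintA := integrable_on (lam / α) cl cm hlao.le (le_of_eq hcl.symm) ho1.le (by linarith)
    have hintB := integrable_on (lam / α) cm ch hlao.le (by rw [hcl] at *; linarith) ho2.le ho3.le
    have hintC := integrable_on (lam / α) ch 1 hlao.le (by rw [hcl] at *; linarith) ho3.le le_rfl
    have hlow1 : (cm - cl) * (μ / α) ≤ ∫ z in cl..cm, Finv (1 - z) := by
      have hb : ∀ z ∈ Set.Icc cl cm, μ / α ≤ Finv (1 - z) := by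
        intro z hz
        have h1 : F (μ / α) ≤ 1 - z := by have := hz.2; rw [hcm] at this; linarith
        have h2 : 1 - z ≤ F (lam / α) := by have := hz.1; rw [hcl] at this; linarith
        calc μ / α = Finv (F (μ / α)) := (hFinv' _ hμa.le).symm
          _ ≤ Finv (1 - z) := fle (F (μ / α)) (1 - z) (lam / α)
              (by rw [← hF0]; exact hFmono (le_refl (0:ℝ)) (mem_Ici.mpr hμa.le) hμa) h1 hlao.le h2
      have := intervalIntegral.integral_mono_on ho1.le intervalIntegrable_const hintA hb
      rwa [intervalIntegral.integral_const, smul_eq_mul] at this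
    have hlow2 : (ch - cm) * (lamhat / α) ≤ ∫ z in cm..ch, Finv (1 - z) := by
      have hb : ∀ z ∈ Set.Icc cm ch, lamhat / α ≤ Finv (1 - z) := by
        intro z hz
        have h1 : F (lamhat / α) ≤ 1 - z := by have := hz.2; rw [hch] at this; linarith
        have h2 : 1 - z ≤ F (lam / α) := by have := hz.1; rw [hcm] at this; linarith
        calc lamhat / α = Finv (F (lamhat / α)) := (hFinv' _ hlha.le).symm
          _ ≤ Finv (1 - z) := fle (F (lamhat / α)) (1 - z) (lam / α) huh_pos h1 hlao.le h2
      have := intervalIntegral.integral_mono_on ho2.le intervalIntegrable_const hintB hb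
      rwa [intervalIntegral.integral_const, smul_eq_mul] at this
    have hsplit1 := intervalIntegral.integral_add_adjacent_intervals hintA hintB
    have hsplit2 := intervalIntegral.integral_add_adjacent_intervals (hintA.trans hintB) hintC
    have hkey : (cm - cl) * (lamhat / α) < (cm - cl) * (μ / α) :=
      mul_lt_mul_of_pos_left ((div_lt_div_iff_of_pos_right hα0).mpr hμ1) (by linarith)
    have e1 : lamhat * (α - 1 + F (lamhat / α)) / α + (cm - cl) * (lamhat / α)
        + (ch - cm) * (lamhat / α) = lamhat / α * (α - 1 + F (lam / α)) := by
      rw [hch, hcm, hcl]; field_simp; ring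
    linarith
end

section
/- With φ_λ as above and λ ∈ [λ̂, ∞) (so that there exists z₀ ∈ [0,1) with φ_λ(z₀) ≥ φ_λ(1) = 0), for any ν > 0 and any increasing strictly concave U with U(x) → ∞ as x → ∞, the supremum over left-continuous increasing nonnegative G of ∫_0^1 (U(G(z)+ℓ) - ν G(z) φ'_λ(z)) dz is +∞. In particular, taking G_k(z) = k·1_{{z>z₀}}, the objective equals U(ℓ)z₀ + U(k+ℓ)(1-z₀) - νk(φ_λ(1)-φ_λ(z₀)) ≥ U(ℓ)z₀ + U(k+ℓ)(1-z₀) → ∞ as k → ∞. -/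
open Set MeasureTheory intervalIntegral Filter

/-- if there is z₀ ∈ [0,1) with φ_λ(z₀) ≥ φ_λ(1) = 0, then the supremum of
∫_0^1 (U(G(z)+ℓ) - νG(z)φ'_λ(z))dz over quantiles G is +∞; in particular, for
G_k = k·1_{z>z₀} the objective equals U(ℓ)z₀ + U(k+ℓ)(1-z₀) - νk(φ_λ(1)-φ_λ(z₀))
≥ U(ℓ)z₀ + U(k+ℓ)(1-z₀) → ∞. -/
theorem stmt_9 (F Finv : ℝ → ℝ) (α ℓ lam ν : ℝ) (hα : α ∈ Set.Ioo (0:ℝ) 1)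
    (hℓ : 0 ≤ ℓ) (hlam : 0 < lam) (hν : 0 < ν)
    (hFcont : Continuous F) (hFmono : StrictMonoOn F (Set.Ici 0)) (hF0 : F 0 = 0)
    (hFinv : ∀ p ∈ Set.Icc (0:ℝ) 1, F (Finv p) = p)
    (hmean : IntervalIntegrable (fun y => Finv (1 - y)) MeasureTheory.volume 0 1)
    (φ φ' : ℝ → ℝ)
    (hφ : ∀ z, φ z = -(∫ y in z..1, Finv (1 - y))
        + lam * ((α - z) / α) * (if z ≤ α then 1 else 0))
    (hφ' : ∀ z, φ' z = Finv (1 - z) - (lam / α) * (if z ≤ α then 1 else 0))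
    (z₀ : ℝ) (hz₀ : z₀ ∈ Set.Ico (0:ℝ) 1) (hz₀φ : φ 1 ≤ φ z₀)
    (U : ℝ → ℝ) (hUmono : StrictMonoOn U (Set.Ici 0))
    (hUconc : StrictConcaveOn ℝ (Set.Ici 0) U)
    (hUtop : Filter.Tendsto U Filter.atTop Filter.atTop) :
    ¬ BddAbove {v : ℝ | ∃ G : ℝ → ℝ,
        (∀ z ∈ Set.Ioo (0:ℝ) 1, 0 ≤ G z) ∧ MonotoneOn G (Set.Ioo 0 1) ∧
        (∀ z ∈ Set.Ioo (0:ℝ) 1, ContinuousWithinAt G (Set.Iic z) z) ∧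
        v = ∫ z in (0:ℝ)..1, (U (G z + ℓ) - ν * G z * φ' z)} ∧
    (∀ k ≥ (0:ℝ),
      (∫ z in (0:ℝ)..1, (U ((if z₀ < z then k else 0) + ℓ)
          - ν * (if z₀ < z then k else 0) * φ' z))
        = U ℓ * z₀ + U (k + ℓ) * (1 - z₀) - ν * k * (φ 1 - φ z₀) ∧
      U ℓ * z₀ + U (k + ℓ) * (1 - z₀)
        ≤ U ℓ * z₀ + U (k + ℓ) * (1 - z₀) - ν * k * (φ 1 - φ z₀)) ∧
    Filter.Tendsto (fun k => U ℓ * z₀ + U (k + ℓ) * (1 - z₀)) Filter.atTop Filter.atTop := by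
  obtain ⟨hα0, hα1⟩ := hα
  obtain ⟨hz00, hz01⟩ := hz₀
  -- indicator antitone
  have hind : Antitone (fun z : ℝ => if z ≤ α then (1:ℝ) else 0) := by
    intro a b hab
    by_cases hb : b ≤ α
    · simp [hb, hab.trans hb]
    · by_cases ha : a ≤ α <;> simp [hb, ha]
  have hindInt : ∀ a b : ℝ, IntervalIntegrable (fun z : ℝ => if z ≤ α then (1:ℝ) else 0)
      volume a b := fun a b => hind.intervalIntegrable
  -- integrability of Finv (1 - ·) on z₀..1
  have hFInt : IntervalIntegrable (fun y => Finv (1 - y)) volume z₀ 1 :=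
    hmean.mono_set (uIcc_subset_uIcc (by simp [uIcc_of_le, hz00, hz01.le])
      (by simp [uIcc_of_le, (zero_le_one : (0:ℝ) ≤ 1)]))
  -- integrability of φ'
  have hφ'Int : IntervalIntegrable φ' volume z₀ 1 := by
    have h : IntervalIntegrable (fun z => Finv (1 - z)
        - (lam / α) * (if z ≤ α then 1 else 0)) volume z₀ 1 :=
      hFInt.sub ((hindInt z₀ 1).const_mul _)
    exact h.congr (fun z _ => (hφ' z).symm)
  -- integral of indicator
  have hindI : (∫ z in z₀..1, (if z ≤ α then (1:ℝ) else 0))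
      = (if z₀ ≤ α then α - z₀ else 0) := by
    by_cases hc : z₀ ≤ α
    · rw [if_pos hc]
      have h1 : (∫ z in z₀..α, (if z ≤ α then (1:ℝ) else 0)) = α - z₀ := by
        rw [integral_congr (g := fun _ => (1:ℝ))
          (fun z hz => if_pos ((uIcc_of_le hc ▸ hz).2))]
        simp
      have h2 : (∫ z in α..1, (if z ≤ α then (1:ℝ) else 0)) = 0 := by
        rw [intervalIntegral.integral_congr_ae (g := fun _ => (0:ℝ))
          (Filter.Eventually.of_forall (fun z hz => by
            rw [Set.uIoc_of_le hα1.le] at hz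
            exact if_neg (not_le.mpr hz.1)))]
        simp
      rw [← integral_add_adjacent_intervals (b := α) (hindInt z₀ α) (hindInt α 1), h1, h2]
      ring
    · rw [if_neg hc]
      rw [intervalIntegral.integral_congr_ae (g := fun _ => (0:ℝ))
        (Filter.Eventually.of_forall (fun z hz => by
          rw [Set.uIoc_of_le hz01.le] at hz
          exact if_neg (not_le.mpr ((lt_of_not_ge hc).trans hz.1))))]
      simp
  -- integral of φ' equals φ 1 - φ z₀
  have hIφ' : (∫ z in z₀..1, φ' z) = φ 1 - φ z₀ := by
    have hsplit : (∫ z in z₀..1, φ' z)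
        = (∫ z in z₀..1, Finv (1 - z))
          - (lam / α) * (if z₀ ≤ α then α - z₀ else 0) := by
      rw [integral_congr (g := fun z => Finv (1 - z)
          - (lam / α) * (if z ≤ α then 1 else 0)) (fun z _ => hφ' z),
        integral_sub hFInt ((hindInt z₀ 1).const_mul _),
        intervalIntegral.integral_const_mul, hindI]
    rw [hsplit, hφ 1, hφ z₀, if_neg (not_le.mpr hα1)]
    rw [intervalIntegral.integral_same]
    have hαne : α ≠ 0 := ne_of_gt hα0
    by_cases hc : z₀ ≤ α
    · simp only [if_pos hc]
      field_simp
      ring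
    · simp only [if_neg hc]
      ring
  -- the key computation for each k ≥ 0
  have key : ∀ k ≥ (0:ℝ),
      (∫ z in (0:ℝ)..1, (U ((if z₀ < z then k else 0) + ℓ)
          - ν * (if z₀ < z then k else 0) * φ' z))
        = U ℓ * z₀ + U (k + ℓ) * (1 - z₀) - ν * k * (φ 1 - φ z₀) := by
    intro k hk
    set f : ℝ → ℝ := fun z => U ((if z₀ < z then k else 0) + ℓ)
          - ν * (if z₀ < z then k else 0) * φ' z with hf
    have intA : IntervalIntegrable f volume 0 z₀ := by
      rw [intervalIntegrable_iff, Set.uIoc_of_le hz00]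
      have hconst : IntegrableOn (fun _ : ℝ => U ℓ) (Set.Ioc 0 z₀) volume :=
        integrableOn_const measure_Ioc_lt_top.ne
      exact hconst.congr (ae_restrict_of_forall_mem measurableSet_Ioc
        (fun z hz => by simp [hf, not_lt.mpr hz.2]))
    have intB : IntervalIntegrable f volume z₀ 1 := by
      have h : IntervalIntegrable (fun z => U (k + ℓ) - ν * k * φ' z) volume z₀ 1 :=
        intervalIntegrable_const.sub (hφ'Int.const_mul _)
      rw [intervalIntegrable_iff, Set.uIoc_of_le hz01.le] at h ⊢
      exact h.congr (ae_restrict_of_forall_mem measurableSet_Ioc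
        (fun z hz => by simp [hf, hz.1]))
    have hA : (∫ z in (0:ℝ)..z₀, f z) = U ℓ * z₀ := by
      rw [integral_congr (g := fun _ => U ℓ) (fun z hz => by
        rw [Set.uIcc_of_le hz00] at hz
        simp [hf, not_lt.mpr hz.2])]
      simp [mul_comm]
    have hB : (∫ z in z₀..1, f z) = U (k + ℓ) * (1 - z₀) - ν * k * (φ 1 - φ z₀) := by
      rw [intervalIntegral.integral_congr_ae (g := fun z => U (k + ℓ) - ν * k * φ' z)
        (Filter.Eventually.of_forall (fun z hz => by
          rw [Set.uIoc_of_le hz01.le] at hz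
          simp [hf, hz.1]))]
      rw [integral_sub intervalIntegrable_const (hφ'Int.const_mul _),
        intervalIntegral.integral_const_mul, hIφ']
      simp [mul_comm]
    calc (∫ z in (0:ℝ)..1, f z)
        = (∫ z in (0:ℝ)..z₀, f z) + (∫ z in z₀..1, f z) :=
          (integral_add_adjacent_intervals intA intB).symm
      _ = U ℓ * z₀ + U (k + ℓ) * (1 - z₀) - ν * k * (φ 1 - φ z₀) := by
          rw [hA, hB]; ring
  have ineq : ∀ k ≥ (0:ℝ), U ℓ * z₀ + U (k + ℓ) * (1 - z₀)
      ≤ U ℓ * z₀ + U (k + ℓ) * (1 - z₀) - ν * k * (φ 1 - φ z₀) := by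
    intro k hk
    have h1 : ν * k * (φ 1 - φ z₀) ≤ 0 :=
      mul_nonpos_of_nonneg_of_nonpos (mul_nonneg hν.le hk) (by linarith)
    linarith
  have tend : Filter.Tendsto (fun k => U ℓ * z₀ + U (k + ℓ) * (1 - z₀))
      Filter.atTop Filter.atTop := by
    have h1 : Tendsto (fun k : ℝ => k + ℓ) atTop atTop :=
      tendsto_atTop_add_const_right _ _ tendsto_id
    have h2 : Tendsto (fun k : ℝ => U (k + ℓ)) atTop atTop := hUtop.comp h1
    have h3 : Tendsto (fun k : ℝ => U (k + ℓ) * (1 - z₀)) atTop atTop :=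
      h2.atTop_mul_const (by linarith)
    exact tendsto_atTop_add_const_left _ _ h3
  refine ⟨?_, fun k hk => ⟨key k hk, ineq k hk⟩, tend⟩
  rintro ⟨M, hM⟩
  obtain ⟨K, hK⟩ := (tend.eventually_gt_atTop M).exists_forall_of_atTop
  set k := max K 0 with hkdef
  have hk0 : (0:ℝ) ≤ k := le_max_right _ _
  have hmem : (U ℓ * z₀ + U (k + ℓ) * (1 - z₀) - ν * k * (φ 1 - φ z₀)) ∈
      {v : ℝ | ∃ G : ℝ → ℝ,
        (∀ z ∈ Set.Ioo (0:ℝ) 1, 0 ≤ G z) ∧ MonotoneOn G (Set.Ioo 0 1) ∧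
        (∀ z ∈ Set.Ioo (0:ℝ) 1, ContinuousWithinAt G (Set.Iic z) z) ∧
        v = ∫ z in (0:ℝ)..1, (U (G z + ℓ) - ν * G z * φ' z)} := by
    refine ⟨fun z => if z₀ < z then k else 0, ?_, ?_, ?_, (key k hk0).symm⟩
    · intro z _
      by_cases h : z₀ < z <;> simp [h, hk0]
    · intro a _ b _ hab
      dsimp only
      by_cases h1 : z₀ < a
      · rw [if_pos h1, if_pos (lt_of_lt_of_le h1 hab)]
      · by_cases h2 : z₀ < b <;> simp [h1, h2, hk0]
    · intro z hz
      by_cases hc : z₀ < z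
      · refine ContinuousWithinAt.congr_of_eventuallyEq
          (continuousWithinAt_const : ContinuousWithinAt (fun _ => k) (Set.Iic z) z)
          ?_ (if_pos hc)
        refine eventually_nhdsWithin_of_eventually_nhds ?_
        filter_upwards [isOpen_Ioi.eventually_mem (show z ∈ Set.Ioi z₀ from hc)] with w hw
        exact if_pos hw
      · refine ContinuousWithinAt.congr
          (continuousWithinAt_const : ContinuousWithinAt (fun _ => (0:ℝ)) (Set.Iic z) z)
          (fun w hw => if_neg (fun h => hc (lt_of_lt_of_le h hw))) (if_neg hc)
  have h1 := hM hmem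
  have h2 := ineq k hk0
  have h3 := hK k (le_max_left _ _)
  linarith
end

section
/- Let F be a continuous strictly increasing CDF on (0,∞) of a log-normally distributed random variable, α∈(0,1), and 0 < λ < λ̂. Define φ_λ(z) = -∫_z^1 F^{-1}(1-y)dy + λ(α-z)/α·1_{{z≤α}}. Then there exist z₁ ∈ (0,α) and z₂ ∈ (α,1) with z₁ = 1 - F(F^{-1}(1-z₂) + λ/α), satisfying φ_λ(z₂) - φ_λ(z₁) - φ'_λ(z₂)(z₂ - z₁) = 0 and φ'_λ(z₁) = φ'_λ(z₂); the concave envelope of φ_λ on [0,1] coincides with φ_λ on [0,z₁]∪[z₂,1] and is affine on [z₁,z₂]. -/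
open Set MeasureTheory intervalIntegral Filter ProbabilityTheory Topology



lemma ae_ne_pt (a : ℝ) : ∀ᵐ x : ℝ, x ≠ a := by
  rw [MeasureTheory.ae_iff]
  have : {x : ℝ | ¬ x ≠ a} = {a} := by ext x; simp
  rw [this]
  exact Real.volume_singleton

/-- Concavity from an integral representation with an antitone integrand. -/
lemma concave_of_integral_rep {ψ c : ℝ → ℝ} {a b : ℝ}
    (hψint : IntervalIntegrable ψ volume a b)
    (hanti : ∀ u v, a < u → u ≤ v → v < b → ψ v ≤ ψ u)
    (hrep : ∀ u ∈ Icc a b, ∀ v ∈ Icc a b, c v - c u = ∫ y in u..v, ψ y) :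
    ConcaveOn ℝ (Icc a b) c := by
  refine concaveOn_of_slope_anti_adjacent (convex_Icc a b) ?_
  intro x y z hx hz hxy hyz
  have hy : y ∈ Icc a b := ⟨hx.1.trans hxy.le, hyz.le.trans hz.2⟩
  have hay : a < y := lt_of_le_of_lt hx.1 hxy
  have hyb : y < b := lt_of_lt_of_le hyz hz.2
  have hsub1 : IntervalIntegrable ψ volume x y := by
    apply hψint.mono_set
    rw [uIcc_of_le (hxy.le), uIcc_of_le ((hx.1.trans hx.2 : a ≤ b))]
    exact Icc_subset_Icc hx.1 hy.2
  have hsub2 : IntervalIntegrable ψ volume y z := by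
    apply hψint.mono_set
    rw [uIcc_of_le (hyz.le), uIcc_of_le ((hx.1.trans hx.2 : a ≤ b))]
    exact Icc_subset_Icc hy.1 hz.2
  have h1 : ψ y * (y - x) ≤ c y - c x := by
    rw [hrep x hx y hy]
    have hae : (fun _ : ℝ => ψ y) ≤ᵐ[volume.restrict (Icc x y)] ψ := by
      filter_upwards [ae_restrict_mem measurableSet_Icc,
        ae_restrict_of_ae (ae_ne_pt a)] with u hu hua
      exact hanti u y (lt_of_le_of_ne (hx.1.trans hu.1) (Ne.symm hua)) hu.2 hyb
    have := intervalIntegral.integral_mono_ae_restrict hxy.le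
      (intervalIntegrable_const) hsub1 hae
    simpa [mul_comm] using this
  have h2 : c z - c y ≤ ψ y * (z - y) := by
    rw [hrep y hy z hz]
    have hae : ψ ≤ᵐ[volume.restrict (Icc y z)] (fun _ : ℝ => ψ y) := by
      filter_upwards [ae_restrict_mem measurableSet_Icc,
        ae_restrict_of_ae (ae_ne_pt b)] with u hu hub
      exact hanti y u hay hu.1 (lt_of_le_of_ne (hu.2.trans hz.2) hub)
    have := intervalIntegral.integral_mono_ae_restrict hyz.le
      hsub2 (intervalIntegrable_const) hae
    simpa [mul_comm] using this
  rw [div_le_div_iff₀ (by linarith) (by linarith)]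
  nlinarith [h1, h2, sub_pos.2 hxy, sub_pos.2 hyz]

/-- Strict upper bound for the integral of a function that is `≤ C`, antitone past the
midpoint, with value `< C` at the midpoint. -/
lemma integral_lt_const {f : ℝ → ℝ} {a b C : ℝ} (hab : a < b)
    (hf : IntervalIntegrable f volume a b)
    (hC : ∀ u ∈ Icc a b, f u ≤ C)
    (hmid : ∀ u ∈ Icc ((a+b)/2) b, f u ≤ f ((a+b)/2))
    (hlt : f ((a+b)/2) < C) :
    ∫ y in a..b, f y < C * (b - a) := by
  set mdl := (a+b)/2 with hm
  have ham : a ≤ mdl := by rw [hm]; linarith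
  have hmb : mdl ≤ b := by rw [hm]; linarith
  have hint1 : IntervalIntegrable f volume a mdl := by
    apply hf.mono_set; rw [uIcc_of_le ham, uIcc_of_le hab.le]; exact Icc_subset_Icc le_rfl hmb
  have hint2 : IntervalIntegrable f volume mdl b := by
    apply hf.mono_set; rw [uIcc_of_le hmb, uIcc_of_le hab.le]; exact Icc_subset_Icc ham le_rfl
  have e1 : ∫ y in a..mdl, f y ≤ C * (mdl - a) := by
    have := intervalIntegral.integral_mono_on ham hint1 intervalIntegrable_const
      (fun u hu => hC u ⟨hu.1, hu.2.trans hmb⟩)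
    simpa [mul_comm] using this
  have e2 : ∫ y in mdl..b, f y ≤ f mdl * (b - mdl) := by
    have := intervalIntegral.integral_mono_on hmb hint2 intervalIntegrable_const hmid
    simpa [mul_comm] using this
  have hsplit : (∫ y in a..mdl, f y) + ∫ y in mdl..b, f y = ∫ y in a..b, f y :=
    intervalIntegral.integral_add_adjacent_intervals hint1 hint2
  have hmblt : mdl < b := by rw [hm]; linarith
  nlinarith [e1, e2, hsplit]

/-- Strict lower bound, mirror version. -/
lemma const_lt_integral {f : ℝ → ℝ} {a b C : ℝ} (hab : a < b)
    (hf : IntervalIntegrable f volume a b)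
    (hC : ∀ u ∈ Icc a b, C ≤ f u)
    (hmid : ∀ u ∈ Icc a ((a+b)/2), f ((a+b)/2) ≤ f u)
    (hlt : C < f ((a+b)/2)) :
    C * (b - a) < ∫ y in a..b, f y := by
  set mdl := (a+b)/2 with hm
  have ham : a ≤ mdl := by rw [hm]; linarith
  have hmb : mdl ≤ b := by rw [hm]; linarith
  have hint1 : IntervalIntegrable f volume a mdl := by
    apply hf.mono_set; rw [uIcc_of_le ham, uIcc_of_le hab.le]; exact Icc_subset_Icc le_rfl hmb
  have hint2 : IntervalIntegrable f volume mdl b := by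
    apply hf.mono_set; rw [uIcc_of_le hmb, uIcc_of_le hab.le]; exact Icc_subset_Icc ham le_rfl
  have e1 : f mdl * (mdl - a) ≤ ∫ y in a..mdl, f y := by
    have := intervalIntegral.integral_mono_on ham intervalIntegrable_const hint1 hmid
    simpa [mul_comm] using this
  have e2 : C * (b - mdl) ≤ ∫ y in mdl..b, f y := by
    have := intervalIntegral.integral_mono_on hmb intervalIntegrable_const hint2
      (fun u hu => hC u ⟨ham.trans hu.1, hu.2⟩)
    simpa [mul_comm] using this
  have hsplit : (∫ y in a..mdl, f y) + ∫ y in mdl..b, f y = ∫ y in a..b, f y :=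
    intervalIntegral.integral_add_adjacent_intervals hint1 hint2
  have halm : a < mdl := by rw [hm]; linarith
  nlinarith [e1, e2, hsplit]


noncomputable def GPhi (m : ℝ) (v : NNReal) (t : ℝ) : ℝ :=
  ∫ u in Iic t, gaussianPDFReal m v u

lemma GPhi_sub (m : ℝ) (v : NNReal) (s t : ℝ) :
    GPhi m v t - GPhi m v s = ∫ u in s..t, gaussianPDFReal m v u :=
  integral_Iic_sub_Iic (integrable_gaussianPDFReal m v).integrableOn
    (integrable_gaussianPDFReal m v).integrableOn

lemma GPhi_strictMono (m : ℝ) {v : NNReal} (hv : v ≠ 0) : StrictMono (GPhi m v) := by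
  intro s t hst
  have h : 0 < ∫ u in s..t, gaussianPDFReal m v u :=
    intervalIntegral_pos_of_pos ((integrable_gaussianPDFReal m v).intervalIntegrable)
      (fun x => gaussianPDFReal_pos m v x hv) hst
  have := GPhi_sub m v s t
  linarith

lemma GPhi_nonneg (m : ℝ) (v : NNReal) (t : ℝ) : 0 ≤ GPhi m v t :=
  setIntegral_nonneg measurableSet_Iic (fun x _ => gaussianPDFReal_nonneg m v x)

lemma GPhi_le_one (m : ℝ) {v : NNReal} (hv : v ≠ 0) (t : ℝ) : GPhi m v t ≤ 1 := by
  have h := setIntegral_le_integral (integrable_gaussianPDFReal m v)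
    (Eventually.of_forall (fun x => gaussianPDFReal_nonneg m v x)) (s := Iic t)
  rw [integral_gaussianPDFReal_eq_one m hv] at h
  exact h

lemma GPhi_pos (m : ℝ) {v : NNReal} (hv : v ≠ 0) (t : ℝ) : 0 < GPhi m v t :=
  lt_of_le_of_lt (GPhi_nonneg m v (t-1)) (GPhi_strictMono m hv (by linarith))

lemma GPhi_lt_one (m : ℝ) {v : NNReal} (hv : v ≠ 0) (t : ℝ) : GPhi m v t < 1 :=
  lt_of_lt_of_le (GPhi_strictMono m hv (show t < t+1 by linarith)) (GPhi_le_one m hv (t+1))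

lemma GPhi_continuous (m : ℝ) (v : NNReal) : Continuous (GPhi m v) := by
  have : GPhi m v = fun t => GPhi m v 0 + ∫ u in (0:ℝ)..t, gaussianPDFReal m v u := by
    funext t
    have := GPhi_sub m v 0 t
    linarith
  rw [this]
  exact continuous_const.add ((integrable_gaussianPDFReal m v).continuous_primitive 0)

lemma GPhi_tendsto_atBot (m : ℝ) (v : NNReal) : Tendsto (GPhi m v) atBot (𝓝 0) := by
  have h := intervalIntegral_tendsto_integral_Iic (μ := volume) 0
    (integrable_gaussianPDFReal m v).integrableOn (tendsto_id (α := ℝ) (x := atBot))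
  have key := (tendsto_const_nhds (x := GPhi m v 0) (f := atBot)).sub h
  have heq : (fun t : ℝ => GPhi m v 0 - ∫ u in id t..(0:ℝ), gaussianPDFReal m v u) = GPhi m v := by
    funext t
    have := GPhi_sub m v t 0
    simp only [id]
    linarith
  rw [heq] at key
  convert key using 2
  show (0:ℝ) = GPhi m v 0 - GPhi m v 0
  ring

lemma gaussian_toReal_eq (m : ℝ) {v : NNReal} (hv : v ≠ 0) (t : ℝ) :
    ((gaussianReal m v) (Iic t)).toReal = GPhi m v t := by
  rw [gaussianReal_apply_eq_integral m hv]
  exact ENNReal.toReal_ofReal (GPhi_nonneg m v t)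
set_option maxHeartbeats 2000000 in
/-- for log-normal F and 0 < λ < λ̂ there exist z₁ ∈ (0,α), z₂ ∈ (α,1) with
z₁ = 1-F(F⁻¹(1-z₂)+λ/α), the tangency equation, φ'_λ(z₁) = φ'_λ(z₂); the concave
envelope of φ_λ coincides with φ_λ on [0,z₁]∪[z₂,1] and is affine on [z₁,z₂]. -/
theorem stmt_11 (F Finv : ℝ → ℝ) (α lam : ℝ) (hα : α ∈ Set.Ioo (0:ℝ) 1)
    (m σ : ℝ) (hσ : 0 < σ)
    (hlognormal : ∀ x > (0:ℝ), F x =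
      ((ProbabilityTheory.gaussianReal m (⟨σ^2, by positivity⟩ : NNReal))
        (Set.Iic (Real.log x))).toReal)
    (hFneg : ∀ x ≤ (0:ℝ), F x = 0)
    (hFinv : ∀ p ∈ Set.Ioo (0:ℝ) 1, F (Finv p) = p)
    (hFinv' : ∀ x > (0:ℝ), Finv (F x) = x)
    (hmean : IntervalIntegrable (fun y => Finv (1 - y)) MeasureTheory.volume 0 1)
    (φ φ' : ℝ → ℝ)
    (hφ : ∀ z, φ z = -(∫ y in z..1, Finv (1 - y))
        + lam * ((α - z) / α) * (if z ≤ α then 1 else 0))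
    (hφ' : ∀ z, φ' z = Finv (1 - z) - (lam / α) * (if z ≤ α then 1 else 0))
    (lamhat : ℝ) (hlamhat_pos : 0 < lamhat)
    (hroot : -(∫ y in (1 - F (lamhat / α))..1, Finv (1 - y))
        + lamhat * (α - 1 + F (lamhat / α)) / α = 0)
    (huniq : ∀ l > (0:ℝ),
      -(∫ y in (1 - F (l / α))..1, Finv (1 - y)) + l * (α - 1 + F (l / α)) / α = 0 →
      l = lamhat)
    (hlam : lam ∈ Set.Ioo (0:ℝ) lamhat) :
    ∃ z₁ ∈ Set.Ioo (0:ℝ) α, ∃ z₂ ∈ Set.Ioo α 1,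
      z₁ = 1 - F (Finv (1 - z₂) + lam / α) ∧
      φ z₂ - φ z₁ - φ' z₂ * (z₂ - z₁) = 0 ∧
      φ' z₁ = φ' z₂ ∧
      ∀ env : ℝ → ℝ,
        (ConcaveOn ℝ (Set.Icc (0:ℝ) 1) env ∧
         (∀ z ∈ Set.Icc (0:ℝ) 1, φ z ≤ env z) ∧
         (∀ h : ℝ → ℝ, ConcaveOn ℝ (Set.Icc (0:ℝ) 1) h →
            (∀ z ∈ Set.Icc (0:ℝ) 1, φ z ≤ h z) →
            ∀ z ∈ Set.Icc (0:ℝ) 1, env z ≤ h z)) →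
        ((∀ z ∈ Set.Icc (0:ℝ) z₁ ∪ Set.Icc z₂ 1, env z = φ z) ∧
         (∀ z ∈ Set.Icc z₁ z₂, env z = φ z₁
            + (z - z₁) * (φ z₂ - φ z₁) / (z₂ - z₁))) := by
  obtain ⟨hα0, hα1⟩ := hα
  obtain ⟨hlam0, hlamlt⟩ := hlam
  set v : NNReal := ⟨σ^2, by positivity⟩ with hvdef
  have hv : v ≠ 0 := by
    intro h
    have h2 : σ^2 = (0:ℝ) := congrArg (fun x : NNReal => (x:ℝ)) h
    nlinarith
  -- basic facts about F
  have hFeq : ∀ x > (0:ℝ), F x = GPhi m v (Real.log x) := by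
    intro x hx
    rw [hlognormal x hx]
    exact gaussian_toReal_eq m hv _
  have hFpos : ∀ x > (0:ℝ), 0 < F x := by
    intro x hx; rw [hFeq x hx]; exact GPhi_pos m hv _
  have hFlt1 : ∀ x, F x < 1 := by
    intro x
    rcases le_or_gt x 0 with h | h
    · rw [hFneg x h]; norm_num
    · rw [hFeq x h]; exact GPhi_lt_one m hv _
  have hFnonneg : ∀ x, 0 ≤ F x := by
    intro x
    rcases le_or_gt x 0 with h | h
    · rw [hFneg x h]
    · exact (hFpos x h).le
  have hFmono : ∀ {x y}, 0 < x → x < y → F x < F y := by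
    intro x y hx hxy
    rw [hFeq x hx, hFeq y (hx.trans hxy)]
    exact GPhi_strictMono m hv (Real.log_lt_log hx hxy)
  have hFle : ∀ {x y}, 0 ≤ x → x ≤ y → F x ≤ F y := by
    intro x y hx hxy
    rcases eq_or_lt_of_le hx with h0 | h0
    · rw [hFneg x h0.symm.le]; exact hFnonneg y
    · rcases eq_or_lt_of_le hxy with h1 | h1
      · rw [h1]
      · exact (hFmono h0 h1).le
  have hF01 : ∀ x > (0:ℝ), F x ∈ Set.Ioo (0:ℝ) 1 := fun x hx => ⟨hFpos x hx, hFlt1 x⟩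
  have hFcontAt : ∀ x > (0:ℝ), ContinuousAt F x := by
    intro x hx
    have hev : ∀ᶠ y in 𝓝 x, GPhi m v (Real.log y) = F y := by
      filter_upwards [eventually_gt_nhds hx] with y hy
      exact (hFeq y hy).symm
    exact ContinuousAt.congr
      (((GPhi_continuous m v).continuousAt).comp (Real.continuousAt_log (ne_of_gt hx))) hev
  have hFcont0 : ContinuousWithinAt F (Set.Ici 0) 0 := by
    rw [← continuousWithinAt_Ioi_iff_Ici]
    unfold ContinuousWithinAt
    rw [hFneg 0 le_rfl]
    have h1 : Tendsto (fun x => GPhi m v (Real.log x)) (nhdsWithin 0 (Set.Ioi 0)) (nhds 0) :=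
      (GPhi_tendsto_atBot m v).comp Real.tendsto_log_nhdsGT_zero
    refine Tendsto.congr' ?_ h1
    filter_upwards [self_mem_nhdsWithin] with y hy
    exact (hFeq y hy).symm
  have hFcontOn : ∀ B : ℝ, ContinuousOn F (Set.Icc 0 B) := by
    intro B x hx
    rcases eq_or_lt_of_le hx.1 with h0 | h0
    · rw [← h0]; exact hFcont0.mono (Set.Icc_subset_Ici_self)
    · exact (hFcontAt x h0).continuousWithinAt
  -- basic facts about Finv
  have hFinvPos : ∀ p ∈ Set.Ioo (0:ℝ) 1, 0 < Finv p := by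
    intro p hp
    by_contra h
    push_neg at h
    have h2 := hFneg (Finv p) h
    rw [hFinv p hp] at h2
    exact absurd h2 (ne_of_gt hp.1)
  have hFinvMono : ∀ p q, p ∈ Set.Ioo (0:ℝ) 1 → q ∈ Set.Ioo (0:ℝ) 1 → p < q →
      Finv p < Finv q := by
    intro p q hp hq hpq
    by_contra h
    push_neg at h
    have h2 : F (Finv q) ≤ F (Finv p) := hFle (hFinvPos q hq).le h
    rw [hFinv p hp, hFinv q hq] at h2
    linarith
  have hfanti : ∀ u v : ℝ, 0 < u → u ≤ v → v < 1 → Finv (1-v) ≤ Finv (1-u) := by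
    intro u v hu huv hv1
    rcases eq_or_lt_of_le huv with h | h
    · rw [h]
    · exact (hFinvMono (1-v) (1-u) ⟨by linarith, by linarith⟩ ⟨by linarith, by linarith⟩
        (by linarith)).le
  have hfstrict : ∀ u v : ℝ, 0 < u → u < v → v < 1 → Finv (1-v) < Finv (1-u) := by
    intro u v hu huv hv1
    exact hFinvMono (1-v) (1-u) ⟨by linarith, by linarith⟩ ⟨by linarith, by linarith⟩
      (by linarith)
  have hfint : ∀ u v : ℝ, 0 ≤ u → u ≤ v → v ≤ 1 →
      IntervalIntegrable (fun y => Finv (1 - y)) volume u v := by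
    intro u v h0 huv h1
    apply hmean.mono_set
    rw [Set.uIcc_of_le huv, Set.uIcc_of_le (zero_le_one)]
    exact Set.Icc_subset_Icc h0 h1
  -- primitive of Finv (1 - ·)
  set Hh : ℝ → ℝ := fun t => ∫ y in (0:ℝ)..t, Finv (1-y) with hHdef
  have hHdiff : ∀ u v : ℝ, 0 ≤ u → u ≤ v → v ≤ 1 → Hh v - Hh u = ∫ y in u..v, Finv (1-y) := by
    intro u v h0 huv h1
    have h := intervalIntegral.integral_add_adjacent_intervals
      (hfint 0 u le_rfl h0 (huv.trans h1)) (hfint u v h0 huv h1)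
    simp only [hHdef]
    linarith
  have hHcont : ContinuousOn Hh (Set.Icc 0 1) := by
    have h := intervalIntegral.continuousOn_primitive_interval (a := (0:ℝ)) (b := (1:ℝ))
      (μ := volume) (f := fun y => Finv (1-y)) ?_
    · rwa [Set.uIcc_of_le zero_le_one] at h
    · rw [Set.uIcc_of_le zero_le_one]
      exact (intervalIntegrable_iff_integrableOn_Icc_of_le zero_le_one).mp hmean
  have hIntNonneg : ∀ c : ℝ, 0 < c → c ≤ 1 → 0 ≤ ∫ y in c..1, Finv (1-y) := by
    intro c hc0 hc1
    have hae : (fun _ : ℝ => (0:ℝ)) ≤ᵐ[volume.restrict (Set.Icc c 1)] fun y => Finv (1-y) := by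
      filter_upwards [ae_restrict_mem measurableSet_Icc, ae_restrict_of_ae (ae_ne_pt 1)]
        with u hu hu1
      have hu1' : u < 1 := lt_of_le_of_ne hu.2 hu1
      exact (hFinvPos (1-u) ⟨by linarith, by linarith [hc0, hu.1]⟩).le
    have h := intervalIntegral.integral_mono_ae_restrict hc1 intervalIntegrable_const
      (hfint c 1 hc0.le hc1 le_rfl) hae
    simpa using h
  have hlamα : 0 < lam / α := div_pos hlam0 hα0
  -- the function η and its negativity at lam
  set N : ℝ → ℝ := fun l => -(Hh 1 - Hh (1 - F (l/α))) + l * (α - 1 + F (l/α))/α with hNdef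
  have hNform : ∀ l : ℝ, 0 < l →
      N l = -(∫ y in (1 - F (l / α))..1, Finv (1 - y)) + l * (α - 1 + F (l / α)) / α := by
    intro l hl
    have hF := hF01 (l/α) (div_pos hl hα0)
    have h := hHdiff (1 - F (l/α)) 1 (by linarith [hF.2]) (by linarith [hF.1]) le_rfl
    simp only [hNdef]
    rw [h]
  have hNlam : N lam < 0 := by
    obtain ⟨t0, ht0⟩ : ∃ t0 : ℝ, GPhi m v t0 < 1 - α := by
      have h2 : ∀ᶠ t in atBot, GPhi m v t < 1 - α :=
        (GPhi_tendsto_atBot m v).eventually_lt_const (by linarith)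
      exact h2.exists
    set x0 := Real.exp t0 with hx0def
    have hx0 : 0 < x0 := Real.exp_pos t0
    have hFx0 : F x0 < 1 - α := by rw [hFeq x0 hx0, hx0def, Real.log_exp]; exact ht0
    set l0 := min (α * x0) (lam/2) with hl0def
    have hl00 : 0 < l0 := lt_min (by positivity) (by linarith)
    have hl0lam : l0 < lam := lt_of_le_of_lt (min_le_right _ _) (by linarith)
    have hl0α : l0 / α ≤ x0 := by
      rw [div_le_iff₀ hα0]
      calc l0 ≤ α * x0 := min_le_left _ _
      _ = x0 * α := mul_comm _ _
    have hFl0 : F (l0/α) < 1 - α := lt_of_le_of_lt (hFle (by positivity) hl0α) hFx0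
    have hNl0 : N l0 < 0 := by
      have h1 : 0 ≤ Hh 1 - Hh (1 - F (l0/α)) := by
        have hF := hF01 (l0/α) (by positivity)
        rw [hHdiff (1 - F (l0/α)) 1 (by linarith [hF.2]) (by linarith [hF.1]) le_rfl]
        exact hIntNonneg _ (by linarith [hF.2]) (by linarith [hF.1])
      have h2 : l0 * (α - 1 + F (l0/α)) / α < 0 := by
        apply div_neg_of_neg_of_pos _ hα0
        apply mul_neg_of_pos_of_neg hl00
        linarith
      simp only [hNdef]
      linarith
    have hNcont : ContinuousOn N (Set.Icc l0 lam) := by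
      have hFc : ContinuousOn (fun l : ℝ => F (l/α)) (Set.Icc l0 lam) := by
        intro l hl
        have hl0' : 0 < l := lt_of_lt_of_le hl00 hl.1
        have h1 : ContinuousAt (fun x : ℝ => x / α) l := continuousAt_id.div_const α
        have h2 : ContinuousAt (fun l : ℝ => F (l/α)) l :=
          ContinuousAt.comp (hFcontAt (l/α) (by positivity)) h1
        exact h2.continuousWithinAt
      have hmapsTo : Set.MapsTo (fun l : ℝ => 1 - F (l/α)) (Set.Icc l0 lam)
          (Set.Icc (0:ℝ) 1) := by
        intro l hl
        have h := hF01 (l/α) (div_pos (lt_of_lt_of_le hl00 hl.1) hα0)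
        exact ⟨by linarith [h.2], by linarith [h.1]⟩
      have hHc : ContinuousOn (fun l : ℝ => Hh (1 - F (l/α))) (Set.Icc l0 lam) :=
        hHcont.comp (continuousOn_const.sub hFc) hmapsTo
      simp only [hNdef]
      exact ((continuousOn_const.sub hHc).neg).add
        ((continuousOn_id.mul (continuousOn_const.add hFc)).div_const α)
    rcases lt_trichotomy (N lam) 0 with h | h | h
    · exact h
    · exfalso
      have hcontra := huniq lam hlam0 (by rw [← hNform lam hlam0]; exact h)
      linarith
    · exfalso
      have hIVT := intermediate_value_Icc hl0lam.le hNcont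
      obtain ⟨l', hl'mem, hl'⟩ := hIVT ⟨hNl0.le, h.le⟩
      have hl'pos : 0 < l' := lt_of_lt_of_le hl00 hl'mem.1
      have hcontra := huniq l' hl'pos (by rw [← hNform l' hl'pos]; exact hl')
      linarith [hl'mem.2]
  have hetaneg : -(∫ y in (1 - F (lam / α))..1, Finv (1 - y))
      + lam * (α - 1 + F (lam / α)) / α < 0 := by
    rw [← hNform lam hlam0]; exact hNlam
  -- the tangency function G
  set xα := Finv (1 - α) with hxαdef
  have hxα : 0 < xα := hFinvPos _ ⟨by linarith, by linarith⟩
  have hFxα : F xα = 1 - α := hFinv _ ⟨by linarith, by linarith⟩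
  set z1f : ℝ → ℝ := fun x => 1 - F (x + lam/α) with hz1fdef
  set z2f : ℝ → ℝ := fun x => 1 - F x with hz2fdef
  set G : ℝ → ℝ := fun x => (Hh (z2f x) - Hh (z1f x)) - lam * (α - z1f x)/α
    - x * (z2f x - z1f x) with hGdef
  have hz1mem : ∀ x : ℝ, 0 ≤ x → z1f x ∈ Set.Ioo (0:ℝ) 1 := by
    intro x hx
    have h := hF01 (x + lam/α) (by linarith)
    exact ⟨by simp only [hz1fdef]; linarith [h.2], by simp only [hz1fdef]; linarith [h.1]⟩
  have hz2mem : ∀ x : ℝ, z2f x ∈ Set.Icc (0:ℝ) 1 := by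
    intro x
    constructor
    · simp only [hz2fdef]; linarith [hFlt1 x]
    · simp only [hz2fdef]; linarith [hFnonneg x]
  have hGcont : ContinuousOn G (Set.Icc 0 xα) := by
    have Fc1 : ContinuousOn F (Set.Icc (0:ℝ) xα) := hFcontOn xα
    have Fc2 : ContinuousOn (fun x : ℝ => F (x + lam/α)) (Set.Icc (0:ℝ) xα) := by
      intro x hx
      have h1 : ContinuousAt (fun x : ℝ => x + lam/α) x := continuousAt_id.add continuousAt_const
      have h2 : ContinuousAt (fun x : ℝ => F (x + lam/α)) x :=
        ContinuousAt.comp (hFcontAt (x + lam/α) (by linarith [hx.1])) h1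
      exact h2.continuousWithinAt
    have z1c : ContinuousOn z1f (Set.Icc (0:ℝ) xα) := continuousOn_const.sub Fc2
    have z2c : ContinuousOn z2f (Set.Icc (0:ℝ) xα) := continuousOn_const.sub Fc1
    have Hz1c : ContinuousOn (fun x => Hh (z1f x)) (Set.Icc (0:ℝ) xα) :=
      hHcont.comp z1c (fun x hx => Set.Ioo_subset_Icc_self (hz1mem x hx.1))
    have Hz2c : ContinuousOn (fun x => Hh (z2f x)) (Set.Icc (0:ℝ) xα) :=
      hHcont.comp z2c (fun x _ => hz2mem x)
    simp only [hGdef]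
    exact (((Hz2c.sub Hz1c)).sub
      ((continuousOn_const.mul (continuousOn_const.sub z1c)).div_const α)).sub
      (continuousOn_id.mul (z2c.sub z1c))
  have hG0 : 0 < G 0 := by
    have hz1f0 : z1f 0 = 1 - F (lam/α) := by simp only [hz1fdef]; rw [zero_add]
    have hz2f0 : z2f 0 = 1 := by simp only [hz2fdef]; rw [hFneg 0 le_rfl]; ring
    have hF := hF01 (lam/α) hlamα
    have hHd := hHdiff (1 - F (lam/α)) 1 (by linarith [hF.2]) (by linarith [hF.1]) le_rfl
    have hkey : lam * (α - (1 - F (lam/α)))/α = lam * (α - 1 + F (lam/α)) / α := by ring_nf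
    simp only [hGdef, hz1f0, hz2f0]
    rw [hkey]
    linarith [hetaneg, hHd]
  obtain ⟨z1α, hz1αdef⟩ : ∃ z : ℝ, z = 1 - F (xα + lam/α) := ⟨_, rfl⟩
  have hFxαl := hF01 (xα + lam/α) (by linarith)
  have hz1α0 : 0 < z1α := by rw [hz1αdef]; linarith [hFxαl.2]
  have hz1αα : z1α < α := by
    have h : F xα < F (xα + lam/α) := hFmono hxα (by linarith)
    rw [hFxα] at h
    rw [hz1αdef]
    linarith
  have hfz1α : Finv (1 - z1α) = xα + lam/α := by
    have h : (1 : ℝ) - z1α = F (xα + lam/α) := by rw [hz1αdef]; ring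
    rw [h]
    exact hFinv' _ (by linarith)
  have hGxα : G xα < 0 := by
    have hz2 : z2f xα = α := by simp only [hz2fdef]; rw [hFxα]; ring
    have hz1 : z1f xα = z1α := by rw [hz1αdef]
    have hIlt : ∫ y in z1α..α, Finv (1-y) < (xα + lam/α) * (α - z1α) := by
      apply integral_lt_const hz1αα (hfint z1α α hz1α0.le hz1αα.le hα1.le)
      · intro u hu
        calc Finv (1-u) ≤ Finv (1 - z1α) :=
              hfanti z1α u hz1α0 hu.1 (lt_of_le_of_lt hu.2 hα1)
        _ = xα + lam/α := hfz1α
      · intro u hu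
        exact hfanti _ u (by linarith) hu.1 (lt_of_le_of_lt hu.2 hα1)
      · rw [← hfz1α]
        exact hfstrict z1α ((z1α + α)/2) hz1α0 (by linarith) (by linarith)
    have hHd := hHdiff z1α α hz1α0.le hz1αα.le hα1.le
    have hkey : (xα + lam/α) * (α - z1α) - lam * (α - z1α)/α - xα * (α - z1α) = 0 := by
      ring
    simp only [hGdef, hz2, hz1]
    linarith [hIlt, hHd, hkey]
  -- intermediate value theorem for G
  obtain ⟨xs, hxsmem, hGxs⟩ := intermediate_value_Icc' hxα.le hGcont ⟨hGxα.le, hG0.le⟩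
  have hxs0 : 0 < xs := by
    rcases eq_or_lt_of_le hxsmem.1 with h | h
    · exfalso; rw [← h] at hGxs; exact (ne_of_gt hG0) hGxs
    · exact h
  have hxsα : xs < xα := by
    rcases eq_or_lt_of_le hxsmem.2 with h | h
    · exfalso; rw [h] at hGxs; exact (ne_of_lt hGxα) hGxs
    · exact h
  -- the two tangency points
  obtain ⟨z₂, hz₂def⟩ : ∃ z : ℝ, z = 1 - F xs := ⟨_, rfl⟩
  obtain ⟨z₁, hz₁def⟩ : ∃ z : ℝ, z = 1 - F (xs + lam/α) := ⟨_, rfl⟩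
  have hFxs := hF01 xs hxs0
  have hFxsl := hF01 (xs + lam/α) (by linarith)
  have hz₂1 : z₂ < 1 := by rw [hz₂def]; linarith [hFxs.1]
  have hz₂α : α < z₂ := by
    have h : F xs < F xα := hFmono hxs0 hxsα
    rw [hFxα] at h
    rw [hz₂def]
    linarith
  have hz₁0 : 0 < z₁ := by rw [hz₁def]; linarith [hFxsl.2]
  have hz₁z₂ : z₁ < z₂ := by
    have h : F xs < F (xs + lam/α) := hFmono hxs0 (by linarith)
    rw [hz₁def, hz₂def]
    linarith
  have hfz₂ : Finv (1 - z₂) = xs := by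
    have h : (1:ℝ) - z₂ = F xs := by rw [hz₂def]; ring
    rw [h]
    exact hFinv' _ hxs0
  have hfz₁ : Finv (1 - z₁) = xs + lam/α := by
    have h : (1:ℝ) - z₁ = F (xs + lam/α) := by rw [hz₁def]; ring
    rw [h]
    exact hFinv' _ (by linarith)
  have hz1fxs : z1f xs = z₁ := by rw [hz₁def]
  have hz2fxs : z2f xs = z₂ := by rw [hz₂def]
  have hGxseq : (Hh z₂ - Hh z₁) - lam * (α - z₁)/α - xs * (z₂ - z₁) = 0 := by
    simp only [hGdef] at hGxs
    rw [hz1fxs, hz2fxs] at hGxs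
    exact hGxs
  have hHd12 := hHdiff z₁ z₂ hz₁0.le hz₁z₂.le hz₂1.le
  have hz₁α : z₁ < α := by
    by_contra hcon
    push_neg at hcon
    have hIgt : xs * (z₂ - z₁) < ∫ y in z₁..z₂, Finv (1-y) := by
      apply const_lt_integral hz₁z₂ (hfint z₁ z₂ hz₁0.le hz₁z₂.le hz₂1.le)
      · intro u hu
        rw [← hfz₂]
        exact hfanti u z₂ (lt_of_lt_of_le hz₁0 hu.1) hu.2 hz₂1
      · intro u hu
        exact hfanti u ((z₁+z₂)/2) (lt_of_lt_of_le hz₁0 hu.1) hu.2 (by linarith)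
      · rw [← hfz₂]
        exact hfstrict ((z₁+z₂)/2) z₂ (by linarith) (by linarith) hz₂1
    have hnp : lam * (α - z₁)/α ≤ 0 :=
      div_nonpos_of_nonpos_of_nonneg
        (mul_nonpos_of_nonneg_of_nonpos hlam0.le (by linarith)) hα0.le
    linarith [hGxseq, hHd12, hIgt, hnp]
  -- the three explicit conclusions
  have hφ'z₂ : φ' z₂ = xs := by
    rw [hφ' z₂, if_neg (not_le.mpr hz₂α), hfz₂]
    ring
  have hφ'z₁ : φ' z₁ = xs := by
    rw [hφ' z₁, if_pos hz₁α.le, hfz₁]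
    ring
  have hφdiff : φ z₂ - φ z₁ = (∫ y in z₁..z₂, Finv (1-y)) - lam * ((α - z₁)/α) := by
    rw [hφ z₂, hφ z₁, if_neg (not_le.mpr hz₂α), if_pos hz₁α.le]
    have hadj := intervalIntegral.integral_add_adjacent_intervals
      (hfint z₁ z₂ hz₁0.le hz₁z₂.le hz₂1.le) (hfint z₂ 1 (by linarith) hz₂1.le le_rfl)
    simp only [mul_one, mul_zero]
    linarith [hadj]
  have htangent : φ z₂ - φ z₁ - φ' z₂ * (z₂ - z₁) = 0 := by
    rw [hφ'z₂, hφdiff]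
    have hr : lam * ((α - z₁)/α) = lam * (α - z₁)/α := by ring
    linarith [hGxseq, hHd12, hr]
  refine ⟨z₁, ⟨hz₁0, hz₁α⟩, z₂, ⟨hz₂α, hz₂1⟩, by rw [hfz₂, ← hz₁def], htangent, by
    rw [hφ'z₁, hφ'z₂], ?_⟩
  -- the envelope part
  have ht2 : φ z₂ - φ z₁ - xs * (z₂ - z₁) = 0 := by rw [← hφ'z₂]; exact htangent
  intro env henv
  obtain ⟨hconc, hmaj, hmin⟩ := henv
  obtain ⟨L, hLdef⟩ : ∃ L : ℝ → ℝ, L = fun z => φ z₁ + xs * (z - z₁) := ⟨_, rfl⟩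
  obtain ⟨cand, hcanddef⟩ : ∃ c : ℝ → ℝ, c = fun z =>
      if z < z₁ then φ z else if z ≤ z₂ then L z else φ z := ⟨_, rfl⟩
  have hφz₂L : φ z₂ = L z₂ := by rw [hLdef]; simp only []; linarith [ht2]
  have hcand_left : ∀ z, z ≤ z₁ → cand z = φ z := by
    intro z hz
    simp only [hcanddef]
    rcases lt_or_eq_of_le hz with h | h
    · rw [if_pos h]
    · rw [if_neg (by rw [h]; exact lt_irrefl z₁), if_pos (by rw [h]; exact hz₁z₂.le), hLdef, h]
      simp
  have hcand_right : ∀ z, z₂ ≤ z → cand z = φ z := by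
    intro z hz
    rcases lt_or_eq_of_le hz with h | h
    · simp only [hcanddef]
      rw [if_neg (not_lt.mpr (le_of_lt (lt_trans hz₁z₂ h))), if_neg (not_le.mpr h)]
    · simp only [hcanddef]
      rw [if_neg (not_lt.mpr (le_of_lt (lt_of_lt_of_le hz₁z₂ hz))), if_pos (le_of_eq h.symm), ← h]
      exact hφz₂L.symm
  have hcand_mid : ∀ z, z₁ ≤ z → z ≤ z₂ → cand z = L z := by
    intro z h1 h2
    simp only [hcanddef]
    rw [if_neg (not_lt.mpr h1), if_pos h2]
  -- the piecewise slope function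
  obtain ⟨ψ, hψdef⟩ : ∃ p : ℝ → ℝ, p = fun y =>
      if y < z₁ then Finv (1-y) - lam/α else if y ≤ z₂ then xs else Finv (1-y) := ⟨_, rfl⟩
  have hψ_left : ∀ y, y ≤ z₁ → ψ y = Finv (1-y) - lam/α := by
    intro y hy
    simp only [hψdef]
    rcases lt_or_eq_of_le hy with h | h
    · rw [if_pos h]
    · rw [if_neg (by rw [h]; exact lt_irrefl z₁), if_pos (by rw [h]; exact hz₁z₂.le), h, hfz₁]
      ring
  have hψ_mid : ∀ y, z₁ ≤ y → y ≤ z₂ → ψ y = xs := by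
    intro y h1 h2
    simp only [hψdef]
    rw [if_neg (not_lt.mpr h1), if_pos h2]
  have hψ_right : ∀ y, z₂ ≤ y → ψ y = Finv (1-y) := by
    intro y hy
    rcases lt_or_eq_of_le hy with h | h
    · simp only [hψdef]
      rw [if_neg (not_lt.mpr (le_of_lt (lt_trans hz₁z₂ h))), if_neg (not_le.mpr h)]
    · simp only [hψdef]
      rw [if_neg (not_lt.mpr (le_of_lt (lt_of_lt_of_le hz₁z₂ hy))), if_pos (le_of_eq h.symm),
        ← h, hfz₂]
  have hψanti : ∀ u w : ℝ, 0 < u → u ≤ w → w < 1 → ψ w ≤ ψ u := by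
    intro u w hu huw hw1
    rcases le_or_gt u z₁ with h1 | h1
    · rw [hψ_left u h1]
      have hub : xs + lam/α ≤ Finv (1-u) := by
        have h := hfanti u z₁ hu h1 (by linarith)
        rw [hfz₁] at h
        linarith
      rcases le_or_gt w z₁ with h2 | h2
      · rw [hψ_left w h2]
        have := hfanti u w hu huw hw1
        linarith
      · rcases le_or_gt w z₂ with h3 | h3
        · rw [hψ_mid w h2.le h3]; linarith
        · rw [hψ_right w h3.le]
          have h := hfanti z₂ w (by linarith) h3.le hw1
          rw [hfz₂] at h
          linarith
    · rcases le_or_gt u z₂ with h3 | h3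
      · rw [hψ_mid u h1.le h3]
        rcases le_or_gt w z₂ with h4 | h4
        · rw [hψ_mid w (by linarith) h4]
        · rw [hψ_right w h4.le]
          have h := hfanti z₂ w (by linarith) h4.le hw1
          rw [hfz₂] at h
          linarith
      · rw [hψ_right u h3.le, hψ_right w (by linarith)]
        exact hfanti u w hu huw hw1
  have hψint : IntervalIntegrable ψ volume 0 1 := by
    have i1 : IntervalIntegrable ψ volume 0 z₁ := by
      have base : IntervalIntegrable (fun y => Finv (1-y) - lam/α) volume 0 z₁ :=
        (hfint 0 z₁ le_rfl hz₁0.le (by linarith)).sub intervalIntegrable_const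
      rw [intervalIntegrable_iff_integrableOn_Icc_of_le hz₁0.le] at base ⊢
      exact base.congr_fun (fun y hy => (hψ_left y hy.2).symm) measurableSet_Icc
    have i2 : IntervalIntegrable ψ volume z₁ z₂ := by
      have base : IntervalIntegrable (fun _ : ℝ => xs) volume z₁ z₂ := intervalIntegrable_const
      rw [intervalIntegrable_iff_integrableOn_Icc_of_le hz₁z₂.le] at base ⊢
      exact base.congr_fun (fun y hy => (hψ_mid y hy.1 hy.2).symm) measurableSet_Icc
    have i3 : IntervalIntegrable ψ volume z₂ 1 := by
      have base : IntervalIntegrable (fun y => Finv (1-y)) volume z₂ 1 :=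
        hfint z₂ 1 (by linarith) hz₂1.le le_rfl
      rw [intervalIntegrable_iff_integrableOn_Icc_of_le hz₂1.le] at base ⊢
      exact base.congr_fun (fun y hy => (hψ_right y hy.1).symm) measurableSet_Icc
    exact (i1.trans i2).trans i3
  have hψint' : ∀ u w : ℝ, u ∈ Set.Icc (0:ℝ) 1 → w ∈ Set.Icc (0:ℝ) 1 →
      IntervalIntegrable ψ volume u w := by
    intro u w hu hw
    apply hψint.mono_set
    rw [Set.uIcc_of_le zero_le_one]
    exact Set.uIcc_subset_Icc hu hw
  -- integral representation of cand
  have hP1 : ∀ t, 0 ≤ t → t ≤ z₁ → cand t - cand 0 = ∫ y in (0:ℝ)..t, ψ y := by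
    intro t h0 h1
    rw [hcand_left t h1, hcand_left 0 hz₁0.le]
    have hcg : ∫ y in (0:ℝ)..t, ψ y = ∫ y in (0:ℝ)..t, (Finv (1-y) - lam/α) :=
      intervalIntegral.integral_congr (fun y hy => by
        rw [Set.uIcc_of_le h0] at hy
        exact hψ_left y (hy.2.trans h1))
    rw [hcg, intervalIntegral.integral_sub (hfint 0 t le_rfl h0 (by linarith))
      intervalIntegrable_const, intervalIntegral.integral_const]
    rw [hφ t, hφ 0, if_pos (le_trans h1 hz₁α.le), if_pos hα0.le]
    have hadj := intervalIntegral.integral_add_adjacent_intervals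
      (hfint 0 t le_rfl h0 (by linarith)) (hfint t 1 h0 (by linarith) le_rfl)
    have hring : lam * ((α - t)/α) - lam * ((α - 0)/α) + (t - 0) * (lam/α) = 0 := by
      ring
    simp only [smul_eq_mul, mul_one]
    linarith [hadj, hring]
  have hP2 : ∀ t, z₁ ≤ t → t ≤ z₂ → cand t - cand z₁ = ∫ y in z₁..t, ψ y := by
    intro t h1 h2
    rw [hcand_mid t h1 h2, hcand_mid z₁ le_rfl hz₁z₂.le, hLdef]
    have hcg : ∫ y in z₁..t, ψ y = ∫ y in z₁..t, (fun _ : ℝ => xs) y :=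
      intervalIntegral.integral_congr (fun y hy => by
        rw [Set.uIcc_of_le h1] at hy
        exact hψ_mid y hy.1 (hy.2.trans h2))
    rw [hcg, intervalIntegral.integral_const]
    simp only [smul_eq_mul]
    ring
  have hP3 : ∀ t, z₂ ≤ t → t ≤ 1 → cand t - cand z₂ = ∫ y in z₂..t, ψ y := by
    intro t h1 h2
    rw [hcand_right t h1, hcand_right z₂ le_rfl]
    have hcg : ∫ y in z₂..t, ψ y = ∫ y in z₂..t, Finv (1-y) :=
      intervalIntegral.integral_congr (fun y hy => by
        rw [Set.uIcc_of_le h1] at hy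
        exact hψ_right y hy.1)
    rw [hcg, hφ t, hφ z₂, if_neg (not_le.mpr hz₂α), if_neg (not_le.mpr (lt_of_lt_of_le hz₂α h1))]
    have hadj := intervalIntegral.integral_add_adjacent_intervals
      (hfint z₂ t (by linarith) h1 h2) (hfint t 1 (by linarith) h2 le_rfl)
    simp only [mul_zero]
    linarith [hadj]
  have hP : ∀ t, t ∈ Set.Icc (0:ℝ) 1 → cand t - cand 0 = ∫ y in (0:ℝ)..t, ψ y := by
    intro t ht
    rcases le_or_gt t z₁ with h1 | h1
    · exact hP1 t ht.1 h1
    · have hq1 := hP1 z₁ hz₁0.le le_rfl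
      rcases le_or_gt t z₂ with h2 | h2
      · have hq2 := hP2 t h1.le h2
        have hadj := intervalIntegral.integral_add_adjacent_intervals
          (hψint' 0 z₁ ⟨le_rfl, zero_le_one⟩ ⟨hz₁0.le, by linarith⟩)
          (hψint' z₁ t ⟨hz₁0.le, by linarith⟩ ht)
        linarith
      · have hq2 := hP2 z₂ hz₁z₂.le le_rfl
        have hq3 := hP3 t h2.le ht.2
        have hadj1 := intervalIntegral.integral_add_adjacent_intervals
          (hψint' 0 z₁ ⟨le_rfl, zero_le_one⟩ ⟨hz₁0.le, by linarith⟩)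
          (hψint' z₁ z₂ ⟨hz₁0.le, by linarith⟩ ⟨by linarith, hz₂1.le⟩)
        have hadj2 := intervalIntegral.integral_add_adjacent_intervals
          (hψint' 0 z₂ ⟨le_rfl, zero_le_one⟩ ⟨by linarith, hz₂1.le⟩)
          (hψint' z₂ t ⟨by linarith, hz₂1.le⟩ ht)
        linarith
  have hrep : ∀ u ∈ Set.Icc (0:ℝ) 1, ∀ w ∈ Set.Icc (0:ℝ) 1,
      cand w - cand u = ∫ y in u..w, ψ y := by
    intro u hu w hw
    have h1 := hP u hu
    have h2 := hP w hw
    have hadj := intervalIntegral.integral_add_adjacent_intervals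
      (hψint' 0 u ⟨le_rfl, zero_le_one⟩ hu) (hψint' u w hu hw)
    linarith
  have hcandConc : ConcaveOn ℝ (Set.Icc (0:ℝ) 1) cand :=
    concave_of_integral_rep hψint hψanti hrep
  have hcandMaj : ∀ z ∈ Set.Icc (0:ℝ) 1, φ z ≤ cand z := by
    intro z hz
    rcases le_or_gt z z₁ with h1 | h1
    · rw [hcand_left z h1]
    · rcases le_or_gt z₂ z with h2 | h2
      · rw [hcand_right z h2]
      · rw [hcand_mid z h1.le h2.le, hLdef]
        simp only []
        rcases le_or_gt z α with h3 | h3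
        · have hint := intervalIntegral.integral_mono_on h1.le
            (hfint z₁ z hz₁0.le h1.le (by linarith)) intervalIntegrable_const
            (f := fun y => Finv (1-y)) (g := fun _ => xs + lam/α)
            (fun u hu => by
              have h := hfanti z₁ u hz₁0 hu.1 (by linarith [hu.2])
              rw [hfz₁] at h
              exact h)
          rw [intervalIntegral.integral_const] at hint
          have hφd : φ z - φ z₁ = (∫ y in z₁..z, Finv (1-y)) - lam * ((α - z₁)/α)
              + lam * ((α - z)/α) := by
            rw [hφ z, hφ z₁, if_pos h3, if_pos hz₁α.le]
            have hadj := intervalIntegral.integral_add_adjacent_intervals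
              (hfint z₁ z hz₁0.le h1.le (by linarith)) (hfint z 1 (by linarith) (by linarith) le_rfl)
            simp only [mul_one]
            linarith [hadj]
          have hring : lam * ((α - z)/α) - lam * ((α - z₁)/α) + (z - z₁) * (lam/α) = 0 := by
            ring
          simp only [smul_eq_mul] at hint
          have hsplit : (z - z₁) * (xs + lam/α) = xs * (z - z₁) + (z - z₁) * (lam/α) := by
            ring
          linarith [hint, hφd, hring, hsplit]
        · have hint := intervalIntegral.integral_mono_on h2.le
            (intervalIntegrable_const) (hfint z z₂ (by linarith) h2.le hz₂1.le)
            (f := fun _ => xs) (g := fun y => Finv (1-y))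
            (fun u hu => by
              have h := hfanti u z₂ (by linarith [hu.1]) hu.2 hz₂1
              rw [hfz₂] at h
              exact h)
          rw [intervalIntegral.integral_const] at hint
          have hφd : φ z₂ - φ z = ∫ y in z..z₂, Finv (1-y) := by
            rw [hφ z₂, hφ z, if_neg (not_le.mpr hz₂α), if_neg (not_le.mpr h3)]
            have hadj := intervalIntegral.integral_add_adjacent_intervals
              (hfint z z₂ (by linarith) h2.le hz₂1.le) (hfint z₂ 1 (by linarith) hz₂1.le le_rfl)
            simp only [mul_zero]
            linarith [hadj]
          simp only [smul_eq_mul] at hint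
          have hsplit : xs * (z₂ - z₁) = (z₂ - z) * xs + xs * (z - z₁) := by ring
          linarith [hint, hφd, ht2, hsplit]
  have hle1 : ∀ z ∈ Set.Icc (0:ℝ) 1, env z ≤ cand z := hmin cand hcandConc hcandMaj
  have hz₁mem' : z₁ ∈ Set.Icc (0:ℝ) 1 := ⟨hz₁0.le, by linarith⟩
  have hz₂mem' : z₂ ∈ Set.Icc (0:ℝ) 1 := ⟨by linarith, hz₂1.le⟩
  have hle2 : ∀ z ∈ Set.Icc (0:ℝ) 1, cand z ≤ env z := by
    intro z hz
    rcases le_or_gt z z₁ with h1 | h1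
    · rw [hcand_left z h1]; exact hmaj z hz
    · rcases le_or_gt z₂ z with h2 | h2
      · rw [hcand_right z h2]; exact hmaj z hz
      · rw [hcand_mid z h1.le h2.le, hLdef]
        simp only []
        have hd : (0:ℝ) < z₂ - z₁ := by linarith
        obtain ⟨a, hadef⟩ : ∃ a : ℝ, a = (z₂ - z)/(z₂ - z₁) := ⟨_, rfl⟩
        obtain ⟨b, hbdef⟩ : ∃ b : ℝ, b = (z - z₁)/(z₂ - z₁) := ⟨_, rfl⟩
        have ha : 0 ≤ a := by rw [hadef]; exact div_nonneg (by linarith) hd.le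
        have hb : 0 ≤ b := by
          rw [hbdef]
          apply div_nonneg (by linarith) hd.le
        have hab : a + b = 1 := by
          rw [hadef, hbdef, ← add_div, show z₂ - z + (z - z₁) = z₂ - z₁ by ring,
            div_self hd.ne']
        have hcomb : a * z₁ + b * z₂ = z := by
          rw [hadef, hbdef, div_mul_eq_mul_div, div_mul_eq_mul_div, ← add_div,
            show (z₂ - z) * z₁ + (z - z₁) * z₂ = z * (z₂ - z₁) by ring,
            mul_div_assoc, div_self hd.ne', mul_one]
        have hcc := hconc.2 hz₁mem' hz₂mem' ha hb hab
        simp only [smul_eq_mul] at hcc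
        rw [hcomb] at hcc
        have e1 : φ z₁ ≤ env z₁ := hmaj z₁ hz₁mem'
        have e2 : φ z₂ ≤ env z₂ := hmaj z₂ hz₂mem'
        have hmono : a * φ z₁ + b * φ z₂ ≤ a * env z₁ + b * env z₂ :=
          add_le_add (mul_le_mul_of_nonneg_left e1 ha) (mul_le_mul_of_nonneg_left e2 hb)
        have hline : φ z₁ + xs * (z - z₁) = a * φ z₁ + b * φ z₂ := by
          have hφ2 : φ z₂ = φ z₁ + xs * (z₂ - z₁) := by linarith [ht2]
          rw [hφ2, hadef, hbdef]
          rw [div_mul_eq_mul_div, div_mul_eq_mul_div, ← add_div,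
            show (z₂ - z) * φ z₁ + (z - z₁) * (φ z₁ + xs * (z₂ - z₁))
              = (φ z₁ + xs * (z - z₁)) * (z₂ - z₁) by ring,
            mul_div_assoc, div_self hd.ne', mul_one]
        linarith [hcc, hmono, hline]
  have henvEq : ∀ z ∈ Set.Icc (0:ℝ) 1, env z = cand z :=
    fun z hz => le_antisymm (hle1 z hz) (hle2 z hz)
  constructor
  · intro z hz
    rcases hz with hz | hz
    · rw [henvEq z ⟨hz.1, by linarith [hz.2]⟩, hcand_left z hz.2]
    · rw [henvEq z ⟨by linarith [hz.1], hz.2⟩, hcand_right z hz.1]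
  · intro z hz
    have hzin : z ∈ Set.Icc (0:ℝ) 1 := ⟨by linarith [hz.1], by linarith [hz.2]⟩
    rw [henvEq z hzin, hcand_mid z hz.1 hz.2, hLdef]
    simp only []
    have hφ2 : φ z₂ - φ z₁ = xs * (z₂ - z₁) := by linarith [ht2]
    have hne : z₂ - z₁ ≠ 0 := by intro hc; rw [sub_eq_zero] at hc; exact (ne_of_lt hz₁z₂) hc.symm
    rw [hφ2, show (z - z₁) * (xs * (z₂ - z₁)) = xs * (z - z₁) * (z₂ - z₁) from by ring,
      mul_div_assoc, div_self hne, mul_one]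
end

section
/- In the setting of the concave-envelope lemma (0 < λ < λ̂, log-normal F), the tangency abscissa z₂(λ) and contact point z₁(λ) satisfy: lim_{λ→0+} z₁(λ) = lim_{λ→0+} z₂(λ) = α, and lim_{λ→λ̂} z₁(λ) = 1 - F(λ̂/α), lim_{λ→λ̂} z₂(λ) = 1. -/
open Set MeasureTheory intervalIntegral Filter ProbabilityTheory
open scoped ENNReal NNReal

set_option maxHeartbeats 1000000 in
/-- limits of z₁(λ), z₂(λ): both tend to α as λ→0+, and tend to
1-F(λ̂/α) and 1 respectively as λ→λ̂⁻. -/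
theorem stmt_12 (F Finv : ℝ → ℝ) (α : ℝ) (hα : α ∈ Set.Ioo (0:ℝ) 1)
    (m σ : ℝ) (hσ : 0 < σ)
    (hlognormal : ∀ x > (0:ℝ), F x =
      ((ProbabilityTheory.gaussianReal m (⟨σ^2, by positivity⟩ : NNReal))
        (Set.Iic (Real.log x))).toReal)
    (hFneg : ∀ x ≤ (0:ℝ), F x = 0)
    (hFinv : ∀ p ∈ Set.Ioo (0:ℝ) 1, F (Finv p) = p)
    (hFinv' : ∀ x > (0:ℝ), Finv (F x) = x)
    (hmean : IntervalIntegrable (fun y => Finv (1 - y)) MeasureTheory.volume 0 1)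
    (φ φ' : ℝ → ℝ → ℝ) (s : ℝ → ℝ → ℝ)
    (hφ : ∀ lam z, φ lam z = -(∫ y in z..1, Finv (1 - y))
        + lam * ((α - z) / α) * (if z ≤ α then 1 else 0))
    (hφ' : ∀ lam z, φ' lam z = Finv (1 - z) - (lam / α) * (if z ≤ α then 1 else 0))
    (hs : ∀ lam z, s lam z = 1 - F (Finv (1 - z) + lam / α))
    (lamhat : ℝ) (hlamhat_pos : 0 < lamhat)
    (hroot : -(∫ y in (1 - F (lamhat / α))..1, Finv (1 - y))
        + lamhat * (α - 1 + F (lamhat / α)) / α = 0)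
    (huniq : ∀ l > (0:ℝ),
      -(∫ y in (1 - F (l / α))..1, Finv (1 - y)) + l * (α - 1 + F (l / α)) / α = 0 →
      l = lamhat)
    (z1 z2 : ℝ → ℝ)
    (hz : ∀ lam ∈ Set.Ioo (0:ℝ) lamhat,
      z2 lam ∈ Set.Ioo α 1 ∧
      φ lam (z2 lam) - φ lam (s lam (z2 lam))
        - φ' lam (z2 lam) * (z2 lam - s lam (z2 lam)) = 0 ∧
      (∀ z ∈ Set.Ioo α 1,
        φ lam z - φ lam (s lam z) - φ' lam z * (z - s lam z) = 0 → z = z2 lam) ∧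
      z1 lam = s lam (z2 lam) ∧ z1 lam ∈ Set.Ioo (0:ℝ) α) :
    Filter.Tendsto z1 (nhdsWithin 0 (Set.Ioi 0)) (nhds α) ∧
    Filter.Tendsto z2 (nhdsWithin 0 (Set.Ioi 0)) (nhds α) ∧
    Filter.Tendsto z1 (nhdsWithin lamhat (Set.Iio lamhat)) (nhds (1 - F (lamhat / α))) ∧
    Filter.Tendsto z2 (nhdsWithin lamhat (Set.Iio lamhat)) (nhds 1) := by
  obtain ⟨hα0, hα1⟩ := hα
  set v : NNReal := (⟨σ^2, by positivity⟩ : NNReal) with hv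
  set μ : Measure ℝ := gaussianReal m v with hμ
  have hvne : v ≠ 0 := by
    intro h
    have h2 : (v : ℝ) = 0 := by rw [h]; simp
    rw [hv] at h2
    change σ^2 = 0 at h2
    nlinarith
  -- basic facts about F
  have hF0le : ∀ x, 0 ≤ F x := by
    intro x
    rcases le_or_gt x 0 with h | h
    · rw [hFneg x h]
    · rw [hlognormal x h]; exact ENNReal.toReal_nonneg
  have hFle1 : ∀ x, F x ≤ 1 := by
    intro x
    rcases le_or_gt x 0 with h | h
    · rw [hFneg x h]; norm_num
    · rw [hlognormal x h]
      have h1 : μ (Set.Iic (Real.log x)) ≤ 1 := prob_le_one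
      calc (μ (Set.Iic (Real.log x))).toReal ≤ (1 : ℝ≥0∞).toReal :=
            ENNReal.toReal_mono (by simp) h1
        _ = 1 := by simp
  have hFmono : Monotone F := by
    intro x y hxy
    rcases le_or_gt x 0 with h | h
    · rw [hFneg x h]; exact hF0le y
    · have hy : 0 < y := lt_of_lt_of_le h hxy
      rw [hlognormal x h, hlognormal y hy]
      exact ENNReal.toReal_mono (measure_ne_top μ _)
        (measure_mono (Set.Iic_subset_Iic.2 (Real.log_le_log h hxy)))
  have hFinj : ∀ x > (0:ℝ), ∀ y > (0:ℝ), F x = F y → x = y := by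
    intro x hx y hy h
    have := hFinv' x hx
    rw [h, hFinv' y hy] at this
    exact this.symm
  have hFpos : ∀ x > (0:ℝ), 0 < F x := by
    intro x hx
    rcases (hF0le x).lt_or_eq with h | h
    · exact h
    · exfalso
      have h2 : F (x/2) = 0 := le_antisymm (by rw [← h.symm] at *; exact h ▸ (hFmono (by linarith : x/2 ≤ x)).trans_eq h.symm) (by linarith [hF0le (x/2)])
      have := hFinj (x/2) (by linarith) x hx (by rw [h2, ← h])
      linarith
  have hFlt1 : ∀ x > (0:ℝ), F x < 1 := by
    intro x hx
    rcases (hFle1 x).lt_or_eq with h | h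
    · exact h
    · exfalso
      have h2 : F (x+1) = 1 := le_antisymm (hFle1 _) (by rw [← h]; exact hFmono (by linarith))
      have := hFinj x hx (x+1) (by linarith) (by rw [h, h2])
      linarith
  have hFstrict : ∀ x y : ℝ, 0 < x → x < y → F x < F y := by
    intro x y hx hxy
    rcases (hFmono hxy.le).lt_or_eq with h | h
    · exact h
    · exact absurd (hFinj x hx y (hx.trans hxy) h) hxy.ne
  -- basic facts about Finv
  have hFinvpos : ∀ p ∈ Set.Ioo (0:ℝ) 1, 0 < Finv p := by
    intro p hp
    by_contra h
    push_neg at h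
    have := hFinv p hp
    rw [hFneg _ h] at this
    exact hp.1.ne this
  have hA : ∀ p ∈ Set.Ioo (0:ℝ) 1, ∀ x, F x < p → x < Finv p := by
    intro p hp x h
    by_contra hc
    push_neg at hc
    have := hFmono hc
    rw [hFinv p hp] at this
    linarith
  have hB : ∀ p ∈ Set.Ioo (0:ℝ) 1, ∀ x, p < F x → Finv p < x := by
    intro p hp x h
    by_contra hc
    push_neg at hc
    have := hFmono hc
    rw [hFinv p hp] at this
    linarith
  have hC : ∀ p ∈ Set.Ioo (0:ℝ) 1, ∀ x, x ≤ Finv p → F x ≤ p := by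
    intro p hp x h
    have := hFmono h
    rwa [hFinv p hp] at this
  have hD : ∀ p ∈ Set.Ioo (0:ℝ) 1, ∀ x, Finv p ≤ x → p ≤ F x := by
    intro p hp x h
    have := hFmono h
    rwa [hFinv p hp] at this
  have hFinvstrict : ∀ p ∈ Set.Ioo (0:ℝ) 1, ∀ q ∈ Set.Ioo (0:ℝ) 1, p < q → Finv p < Finv q := by
    intro p hp q hq hpq
    exact hB p hp (Finv q) (by rw [hFinv q hq]; exact hpq)
  have hFinvmono : ∀ p ∈ Set.Ioo (0:ℝ) 1, ∀ q ∈ Set.Ioo (0:ℝ) 1, p ≤ q → Finv p ≤ Finv q := by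
    intro p hp q hq hpq
    rcases hpq.lt_or_eq with h | h
    · exact (hFinvstrict p hp q hq h).le
    · rw [h]
  -- continuity of F on (0, ∞)
  have hFcont : ∀ x : ℝ, 0 < x → ContinuousAt F x := by
    intro x hx
    have hp : F x ∈ Set.Ioo (0:ℝ) 1 := ⟨hFpos x hx, hFlt1 x hx⟩
    rw [Metric.continuousAt_iff]
    intro ε hε
    set p := F x with hpdef
    set ε' := min (ε/2) (min (p/2) ((1-p)/2)) with hε'
    have hε'pos : 0 < ε' := by
      apply lt_min (by linarith) (lt_min (by linarith [hp.1]) (by linarith [hp.2]))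
    have hpm : p - ε' ∈ Set.Ioo (0:ℝ) 1 := by
      constructor
      · have : ε' ≤ p/2 := le_trans (min_le_right _ _) (min_le_left _ _)
        linarith [hp.1]
      · linarith [hp.2]
    have hpp : p + ε' ∈ Set.Ioo (0:ℝ) 1 := by
      constructor
      · linarith [hp.1]
      · have : ε' ≤ (1-p)/2 := le_trans (min_le_right _ _) (min_le_right _ _)
        linarith
    have h1 : Finv (p - ε') < x := hB _ hpm x (by linarith)
    have h2 : x < Finv (p + ε') := hA _ hpp x (by linarith)
    refine ⟨min (x - Finv (p - ε')) (Finv (p + ε') - x), lt_min (by linarith) (by linarith), ?_⟩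
    intro y hy
    rw [Real.dist_eq] at hy ⊢
    have hy1 : Finv (p - ε') < y := by
      have := abs_lt.1 (hy.trans_le (min_le_left _ _))
      linarith [this.1]
    have hy2 : y < Finv (p + ε') := by
      have := abs_lt.1 (hy.trans_le (min_le_right _ _))
      linarith [this.2]
    have hFy1 : p - ε' ≤ F y := hD _ hpm y hy1.le
    have hFy2 : F y ≤ p + ε' := hC _ hpp y hy2.le
    have : ε' ≤ ε/2 := min_le_left _ _
    rw [abs_lt]
    constructor <;> linarith
  -- continuity of Finv on (0,1)
  have hFinvcont : ∀ p ∈ Set.Ioo (0:ℝ) 1, ContinuousAt Finv p := by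
    intro p hp
    set x0 := Finv p with hx0def
    have hx0 : 0 < x0 := hFinvpos p hp
    rw [Metric.continuousAt_iff]
    intro ε hε
    set ε'' := min (ε/2) (x0/2) with hε''
    have hε''pos : 0 < ε'' := lt_min (by linarith) (by linarith)
    have hxm : (0:ℝ) < x0 - ε'' := by
      have : ε'' ≤ x0/2 := min_le_right _ _
      linarith
    have hf1 : F (x0 - ε'') < p := by
      have := hFstrict (x0 - ε'') x0 hxm (by linarith)
      rwa [hFinv p hp] at this
    have hf2 : p < F (x0 + ε'') := by
      have := hFstrict x0 (x0 + ε'') hx0 (by linarith)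
      rwa [hFinv p hp] at this
    refine ⟨min (p - F (x0 - ε'')) (F (x0 + ε'') - p), lt_min (by linarith) (by linarith), ?_⟩
    intro q hq
    rw [Real.dist_eq] at hq ⊢
    have hq1 : F (x0 - ε'') < q := by
      have := abs_lt.1 (hq.trans_le (min_le_left _ _))
      linarith [this.1]
    have hq2 : q < F (x0 + ε'') := by
      have := abs_lt.1 (hq.trans_le (min_le_right _ _))
      linarith [this.2]
    have hqIoo : q ∈ Set.Ioo (0:ℝ) 1 := ⟨lt_of_le_of_lt (hF0le _) hq1, lt_of_lt_of_le hq2 (hFle1 _)⟩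
    have hgt : x0 - ε'' < Finv q := hA q hqIoo (x0 - ε'') hq1
    have hlt : Finv q < x0 + ε'' := hB q hqIoo (x0 + ε'') hq2
    have : ε'' ≤ ε/2 := min_le_left _ _
    rw [abs_lt]
    constructor <;> linarith

  -- integrability facts
  have hFinv_int01 : IntervalIntegrable Finv volume 0 1 := by
    have h := hmean.comp_sub_left 1
    simp only [sub_sub_cancel, sub_zero, sub_self] at h
    exact h.symm
  have hFinv_sub : ∀ a b : ℝ, a ∈ Set.Icc (0:ℝ) 1 → b ∈ Set.Icc (0:ℝ) 1 →
      IntervalIntegrable Finv volume a b := by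
    intro a b ha hb
    apply hFinv_int01.mono_set
    rw [Set.uIcc_of_le (zero_le_one)]
    exact Set.uIcc_subset_Icc ha hb
  have hmean_sub : ∀ a b : ℝ, a ∈ Set.Icc (0:ℝ) 1 → b ∈ Set.Icc (0:ℝ) 1 →
      IntervalIntegrable (fun y => Finv (1 - y)) volume a b := by
    intro a b ha hb
    apply hmean.mono_set
    rw [Set.uIcc_of_le (zero_le_one)]
    exact Set.uIcc_subset_Icc ha hb
  have hFint : ∀ a b : ℝ, IntervalIntegrable F volume a b :=
    fun a b => (hFmono.monotoneOn _).intervalIntegrable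
  -- derivative of F on (0, ∞)
  have hFderiv : ∀ x : ℝ, 0 < x → ∃ d : ℝ, HasDerivAt F d x := by
    intro x hx
    set pdf : ℝ → ℝ := gaussianPDFReal m v with hpdf
    have hpdfcont : Continuous pdf := by
      rw [hpdf]; unfold gaussianPDFReal; fun_prop
    have hpdfint : Integrable pdf volume := integrable_gaussianPDFReal m v
    have hFrepr : ∀ y : ℝ, 0 < y →
        F y = F x + ∫ t in (Real.log x)..(Real.log y), pdf t := by
      intro y hy
      have hFy : F y = ∫ t in Set.Iic (Real.log y), pdf t := by
        rw [hlognormal y hy, hμ, gaussianReal_apply_eq_integral m hvne _,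
          ENNReal.toReal_ofReal (setIntegral_nonneg measurableSet_Iic
            (fun t _ => gaussianPDFReal_nonneg m v t))]
      have hFx : F x = ∫ t in Set.Iic (Real.log x), pdf t := by
        rw [hlognormal x hx, hμ, gaussianReal_apply_eq_integral m hvne _,
          ENNReal.toReal_ofReal (setIntegral_nonneg measurableSet_Iic
            (fun t _ => gaussianPDFReal_nonneg m v t))]
      have hsub := integral_Iic_sub_Iic (hpdfint.integrableOn) (hpdfint.integrableOn)
        (a := Real.log x) (b := Real.log y) (μ := volume)
      rw [hFy, hFx]
      linarith
    have hG : HasDerivAt (fun y => F x + ∫ t in (Real.log x)..(Real.log y), pdf t)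
        (pdf (Real.log x) * x⁻¹) x := by
      have houter : HasDerivAt (fun u => ∫ t in (Real.log x)..u, pdf t)
          (pdf (Real.log x)) (Real.log x) :=
        intervalIntegral.integral_hasDerivAt_right (hpdfint.intervalIntegrable)
          (hpdfcont.stronglyMeasurableAtFilter _ _) hpdfcont.continuousAt
      have hlog : HasDerivAt Real.log x⁻¹ x := Real.hasDerivAt_log hx.ne'
      exact (houter.comp x hlog).const_add (F x)
    refine ⟨pdf (Real.log x) * x⁻¹, hG.congr_of_eventuallyEq ?_⟩
    filter_upwards [Ioi_mem_nhds hx] with y hy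
    exact hFrepr y hy
  -- key identity: integral of the inverse function
  have key_I : ∀ b a : ℝ, 0 < b → b < a →
      ∫ u in (F b)..(F a), Finv u = a * F a - b * F b - ∫ x in b..a, F x := by
    intro b a hb hba
    have hFsm : StronglyMeasurable F := (hFmono.measurable).stronglyMeasurable
    have hder : ∀ t ∈ Set.Icc b a,
        HasDerivAt (fun y => ∫ u in (F b)..(F y), Finv u) (t * deriv F t) t ∧
        HasDerivAt (fun y => y * F y - (∫ x in b..y, F x) - b * F b) (t * deriv F t) t := by
      intro t ht
      have htpos : 0 < t := lt_of_lt_of_le hb ht.1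
      obtain ⟨d, hd⟩ := hFderiv t htpos
      have hdd : deriv F t = d := hd.deriv
      have hFt : F t ∈ Set.Ioo (0:ℝ) 1 := ⟨hFpos t htpos, hFlt1 t htpos⟩
      have houter : HasDerivAt (fun w => ∫ u in (F b)..w, Finv u) (Finv (F t)) (F t) :=
        intervalIntegral.integral_hasDerivAt_right
          (hFinv_sub (F b) (F t) ⟨hF0le b, hFle1 b⟩ ⟨hF0le t, hFle1 t⟩)
          (ContinuousAt.stronglyMeasurableAtFilter isOpen_Ioo
            (fun u hu => hFinvcont u hu) _ hFt)
          (hFinvcont _ hFt)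
      have h1 : HasDerivAt (fun y => ∫ u in (F b)..(F y), Finv u) (Finv (F t) * d) t :=
        houter.comp t hd
      rw [hFinv' t htpos] at h1
      have h2 : HasDerivAt (fun y => y * F y) (1 * F t + t * d) t := (hasDerivAt_id t).mul hd
      have h3 : HasDerivAt (fun y => ∫ x in b..y, F x) (F t) t :=
        intervalIntegral.integral_hasDerivAt_right (hFint b t)
          hFsm.stronglyMeasurableAtFilter (hFcont t htpos)
      constructor
      · rw [hdd]; exact h1
      · have h4 := (h2.sub h3).sub_const (b * F b)
        rw [hdd]
        exact h4.congr_deriv (by ring)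
    have hcontf : ContinuousOn (fun y => ∫ u in (F b)..(F y), Finv u) (Set.Icc b a) :=
      fun t ht => ((hder t ht).1.continuousAt).continuousWithinAt
    have hcontg : ContinuousOn (fun y => y * F y - (∫ x in b..y, F x) - b * F b)
        (Set.Icc b a) :=
      fun t ht => ((hder t ht).2.continuousAt).continuousWithinAt
    have heq := eq_of_has_deriv_right_eq (f' := fun t => t * deriv F t)
      (fun t ht => ((hder t (Set.mem_Icc_of_Ico ht)).1).hasDerivWithinAt)
      (fun t ht => ((hder t (Set.mem_Icc_of_Ico ht)).2).hasDerivWithinAt)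
      hcontf hcontg (by simp) a (Set.right_mem_Icc.2 hba.le)
    linarith [heq]
  -- key identity at b = 0
  have key_I0 : ∀ a : ℝ, 0 < a →
      ∫ u in (0:ℝ)..(F a), Finv u = a * F a - ∫ x in (0:ℝ)..a, F x := by
    intro a ha
    set c := (∫ u in (0:ℝ)..(F a), Finv u) - (a * F a - ∫ x in (0:ℝ)..a, F x) with hc
    have hbound : ∀ ε : ℝ, 0 < ε → ε < a → ε ≤ 1 → |c| ≤ 3 * ε := by
      intro ε hε hεa hε1
      have hkey := key_I ε a hε hεa
      have hFε : F ε ∈ Set.Ioo (0:ℝ) 1 := ⟨hFpos ε hε, hFlt1 ε hε⟩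
      have hsplit1 : (∫ u in (0:ℝ)..(F ε), Finv u) + (∫ u in (F ε)..(F a), Finv u)
          = ∫ u in (0:ℝ)..(F a), Finv u :=
        integral_add_adjacent_intervals
          (hFinv_sub _ _ ⟨le_refl 0, zero_le_one⟩ ⟨hF0le _, hFle1 _⟩)
          (hFinv_sub _ _ ⟨hF0le _, hFle1 _⟩ ⟨hF0le _, hFle1 _⟩)
      have hsplit2 : (∫ x in (0:ℝ)..ε, F x) + (∫ x in ε..a, F x) = ∫ x in (0:ℝ)..a, F x :=
        integral_add_adjacent_intervals (hFint _ _) (hFint _ _)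
      have hb1 : |∫ u in (0:ℝ)..(F ε), Finv u| ≤ ε := by
        have hbnd : ∀ u ∈ Set.uIoc (0:ℝ) (F ε), ‖Finv u‖ ≤ ε := by
          intro u hu
          rw [Set.uIoc_of_le (hF0le ε)] at hu
          have huIoo : u ∈ Set.Ioo (0:ℝ) 1 := ⟨hu.1, lt_of_le_of_lt hu.2 hFε.2⟩
          have h1 : Finv u ≤ ε := by
            have h2 := hFinvmono u huIoo (F ε) hFε hu.2
            rwa [hFinv' ε hε] at h2
          rw [Real.norm_eq_abs, abs_of_pos (hFinvpos u huIoo)]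
          exact h1
        have h3 := intervalIntegral.norm_integral_le_of_norm_le_const hbnd
        rw [Real.norm_eq_abs] at h3
        have h4 : |F ε - 0| ≤ 1 := by
          rw [sub_zero, abs_of_nonneg (hF0le _)]; exact hFle1 _
        nlinarith
      have hb2 : |∫ x in (0:ℝ)..ε, F x| ≤ ε := by
        have hbnd : ∀ x ∈ Set.uIoc (0:ℝ) ε, ‖F x‖ ≤ 1 := by
          intro x _
          rw [Real.norm_eq_abs, abs_of_nonneg (hF0le _)]; exact hFle1 _
        have h3 := intervalIntegral.norm_integral_le_of_norm_le_const hbnd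
        rw [Real.norm_eq_abs] at h3
        have h4 : |ε - 0| = ε := by rw [sub_zero, abs_of_pos hε]
        nlinarith
      have hb3 : |ε * F ε| ≤ ε := by
        rw [abs_of_nonneg (mul_nonneg hε.le (hF0le _))]
        nlinarith [hFle1 ε, hF0le ε]
      have hcval : c = (∫ u in (0:ℝ)..(F ε), Finv u) - ε * F ε + ∫ x in (0:ℝ)..ε, F x := by
        rw [hc]; linarith
      have t1 := abs_add_le ((∫ u in (0:ℝ)..(F ε), Finv u) - ε * F ε) (∫ x in (0:ℝ)..ε, F x)
      have t2 := abs_sub (∫ u in (0:ℝ)..(F ε), Finv u) (ε * F ε)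
      rw [hcval]
      linarith
    have hc0 : c = 0 := by
      by_contra hne
      have habs : 0 < |c| := abs_pos.2 hne
      set ε := min (|c|/6) (min (a/2) 1) with hε
      have hεpos : 0 < ε := lt_min (by linarith) (lt_min (by linarith) one_pos)
      have hεa : ε < a :=
        lt_of_le_of_lt (le_trans (min_le_right _ _) (min_le_left _ _)) (by linarith)
      have hε1 : ε ≤ 1 := le_trans (min_le_right _ _) (min_le_right _ _)
      have hb := hbound ε hεpos hεa hε1
      have h6 : ε ≤ |c|/6 := min_le_left _ _
      linarith
    rw [hc] at hc0
    linarith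

  -- global notation
  set B : ℝ := Finv (1 - α) with hBdef
  have h1α : (1-α) ∈ Set.Ioo (0:ℝ) 1 := ⟨by linarith, by linarith⟩
  have hBpos : 0 < B := hFinvpos _ h1α
  have hFB : F B = 1 - α := hFinv _ h1α
  set hhat : ℝ := lamhat / α with hhatdef
  have hhatpos : 0 < hhat := div_pos hlamhat_pos hα0
  -- the tangency equation in integrated form
  have hmain : ∀ lam ∈ Set.Ioo (0:ℝ) lamhat,
      (0 < Finv (1 - z2 lam)) ∧ (Finv (1 - z2 lam) < B) ∧
      (B < Finv (1 - z2 lam) + lam / α) ∧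
      (F (Finv (1 - z2 lam)) = 1 - z2 lam) ∧
      (z1 lam = 1 - F (Finv (1 - z2 lam) + lam / α)) ∧
      (∫ x in (Finv (1 - z2 lam))..(Finv (1 - z2 lam) + lam / α), F x
        = (lam/α) * (1 - α)) := by
    intro lam hlam
    obtain ⟨hz2m, heq, _, hz1s, hz1m⟩ := hz lam hlam
    set Z2 := z2 lam with hZ2def
    set Z1 := s lam Z2 with hZ1
    have hz1m' : Z1 ∈ Set.Ioo (0:ℝ) α := hz1s ▸ hz1m
    have h1Z2 : (1 - Z2) ∈ Set.Ioo (0:ℝ) 1 :=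
      ⟨by linarith [hz2m.2], by linarith [hz2m.1, hα0]⟩
    set b := Finv (1 - Z2) with hbdef
    have hbpos : 0 < b := hFinvpos _ h1Z2
    have hFb : F b = 1 - Z2 := hFinv _ h1Z2
    set a := b + lam / α with hadef
    have hlamα : 0 < lam / α := div_pos hlam.1 hα0
    have hba : b < a := by rw [hadef]; linarith
    have hapos : 0 < a := hbpos.trans hba
    have hZ1F : Z1 = 1 - F a := by rw [hZ1, hs]
    have hFa : F a = 1 - Z1 := by rw [hZ1F]; ring
    have hFinva : Finv (1 - Z1) = a := by rw [← hFa]; exact hFinv' a hapos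
    have hbB : b < B := hFinvstrict _ h1Z2 _ h1α (by linarith [hz2m.1])
    have h1Z1 : (1 - Z1) ∈ Set.Ioo (0:ℝ) 1 :=
      ⟨by linarith [hz1m'.2, hα1], by linarith [hz1m'.1]⟩
    have hBa : B < a := by
      rw [← hFinva]; exact hFinvstrict _ h1α _ h1Z1 (by linarith [hz1m'.2])
    -- unfold the tangency equation
    rw [hφ lam Z2, hφ lam Z1, hφ' lam Z2] at heq
    rw [if_neg (not_le.2 hz2m.1), if_pos (le_of_lt hz1m'.2)] at heq
    simp only [mul_zero, mul_one, add_zero, sub_zero] at heq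
    rw [← hbdef] at heq
    have hZ2m01 : Z2 ∈ Set.Icc (0:ℝ) 1 := ⟨by linarith [hz2m.1], hz2m.2.le⟩
    have hZ1m01 : Z1 ∈ Set.Icc (0:ℝ) 1 := ⟨hz1m'.1.le, by linarith [hz1m'.2]⟩
    have hsplit : (∫ y in Z1..Z2, Finv (1 - y)) + (∫ y in Z2..1, Finv (1 - y))
        = ∫ y in Z1..1, Finv (1 - y) :=
      integral_add_adjacent_intervals (hmean_sub _ _ hZ1m01 hZ2m01)
        (hmean_sub _ _ hZ2m01 ⟨zero_le_one, le_refl 1⟩)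
    have hE : ∫ y in Z1..Z2, Finv (1 - y) = lam * ((α - Z1)/α) + b * (Z2 - Z1) := by
      linarith [heq, hsplit]
    have hcomp : (∫ y in Z1..Z2, Finv (1 - y)) = ∫ u in (1 - Z2)..(1 - Z1), Finv u :=
      intervalIntegral.integral_comp_sub_left Finv 1
    have hkey := key_I b a hbpos hba
    rw [hFb, hFa] at hkey
    have h8 : a * (1 - Z1) - b * (1 - Z2) - (∫ x in b..a, F x)
        = lam * ((α - Z1)/α) + b * (Z2 - Z1) := by
      rw [← hkey, ← hcomp]; exact hE
    have hEE : ∫ x in b..a, F x = (lam/α) * (1 - α) := by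
      have h9 : ∫ x in b..a, F x
          = a * (1 - Z1) - b * (1 - Z2) - lam * ((α - Z1)/α) - b * (Z2 - Z1) := by
        linarith
      rw [h9, hadef]
      field_simp
      ring
    exact ⟨hbpos, hbB, hBa, hFb, by rw [hz1s, hZ1F], hEE⟩
  -- the root equation in integrated form
  have hFhatIoo : F hhat ∈ Set.Ioo (0:ℝ) 1 := ⟨hFpos _ hhatpos, hFlt1 _ hhatpos⟩
  have hroot' : ∫ x in (0:ℝ)..hhat, F x = hhat * (1 - α) := by
    have hk := key_I0 hhat hhatpos
    have hcomp0 : (∫ y in (1 - F hhat)..1, Finv (1 - y)) = ∫ u in (0:ℝ)..(F hhat), Finv u := by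
      have h0 := intervalIntegral.integral_comp_sub_left (a := 1 - F hhat) (b := 1) Finv 1
      simpa using h0
    rw [hcomp0, hk] at hroot
    have hl : lamhat = hhat * α := by rw [hhatdef, div_mul_cancel₀ _ hα0.ne']
    rw [hl] at hroot
    have h2 : hhat * α * (α - 1 + F hhat) / α = hhat * (α - 1 + F hhat) := by
      field_simp
    rw [h2] at hroot
    linarith
  --------------------------------------------------------------------------
  -- limits as lam → 0+
  --------------------------------------------------------------------------
  have hIooA : Set.Ioo (0:ℝ) lamhat ∈ nhdsWithin (0:ℝ) (Set.Ioi 0) :=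
    Ioo_mem_nhdsGT_of_mem ⟨le_refl 0, hlamhat_pos⟩
  have hdivA : Tendsto (fun lam : ℝ => lam / α) (nhdsWithin 0 (Set.Ioi 0)) (nhds 0) := by
    have h0 : Tendsto (fun lam : ℝ => lam / α) (nhds 0) (nhds (0/α)) :=
      (tendsto_id).div_const α
    simpa using h0.mono_left nhdsWithin_le_nhds
  have htbA : Tendsto (fun lam => Finv (1 - z2 lam)) (nhdsWithin 0 (Set.Ioi 0)) (nhds B) := by
    apply tendsto_of_tendsto_of_tendsto_of_le_of_le'
      (g := fun lam : ℝ => B - lam/α) (h := fun _ : ℝ => B)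
    · simpa using tendsto_const_nhds.sub hdivA
    · exact tendsto_const_nhds
    · filter_upwards [hIooA] with lam hlam
      linarith [(hmain lam hlam).2.2.1]
    · filter_upwards [hIooA] with lam hlam
      exact (hmain lam hlam).2.1.le
  have haA : Tendsto (fun lam => Finv (1 - z2 lam) + lam / α)
      (nhdsWithin 0 (Set.Ioi 0)) (nhds B) := by
    simpa using htbA.add hdivA
  have hFcB : Tendsto (fun lam => F (Finv (1 - z2 lam)))
      (nhdsWithin 0 (Set.Ioi 0)) (nhds (1 - α)) := by
    have h0 := ((hFcont B hBpos).tendsto).comp htbA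
    rwa [hFB] at h0
  have hFcA : Tendsto (fun lam => F (Finv (1 - z2 lam) + lam / α))
      (nhdsWithin 0 (Set.Ioi 0)) (nhds (1 - α)) := by
    have h0 := ((hFcont B hBpos).tendsto).comp haA
    rwa [hFB] at h0
  have hz2A : Tendsto z2 (nhdsWithin 0 (Set.Ioi 0)) (nhds α) := by
    have h1 : Tendsto (fun lam => 1 - F (Finv (1 - z2 lam)))
        (nhdsWithin 0 (Set.Ioi 0)) (nhds (1 - (1-α))) := tendsto_const_nhds.sub hFcB
    have h2 : (fun lam => 1 - F (Finv (1 - z2 lam))) =ᶠ[nhdsWithin 0 (Set.Ioi 0)] z2 := by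
      filter_upwards [hIooA] with lam hlam
      rw [(hmain lam hlam).2.2.2.1]
      ring
    have h3 := h1.congr' h2
    have h4 : (1:ℝ) - (1 - α) = α := by ring
    rwa [h4] at h3
  have hz1A : Tendsto z1 (nhdsWithin 0 (Set.Ioi 0)) (nhds α) := by
    have h1 : Tendsto (fun lam => 1 - F (Finv (1 - z2 lam) + lam / α))
        (nhdsWithin 0 (Set.Ioi 0)) (nhds (1 - (1-α))) := tendsto_const_nhds.sub hFcA
    have h2 : (fun lam => 1 - F (Finv (1 - z2 lam) + lam / α))
        =ᶠ[nhdsWithin 0 (Set.Ioi 0)] z1 := by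
      filter_upwards [hIooA] with lam hlam
      rw [(hmain lam hlam).2.2.2.2.1]
    have h3 := h1.congr' h2
    have h4 : (1:ℝ) - (1 - α) = α := by ring
    rwa [h4] at h3
  --------------------------------------------------------------------------
  -- limits as lam → lamhat⁻
  --------------------------------------------------------------------------
  have hIooB : Set.Ioo (0:ℝ) lamhat ∈ nhdsWithin lamhat (Set.Iio lamhat) :=
    Ioo_mem_nhdsLT_of_mem ⟨hlamhat_pos, le_refl lamhat⟩
  -- 1 - α ≤ F hhat
  have hFh1 : 1 - α ≤ F hhat := by
    by_contra hcon
    push_neg at hcon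
    have hb : ∫ x in (0:ℝ)..hhat, F x ≤ hhat * F hhat := by
      have h0 := intervalIntegral.integral_mono_on hhatpos.le (hFint 0 hhat)
        (_root_.intervalIntegrable_const (c := F hhat)) (fun x hx => hFmono hx.2)
      simpa using h0
    nlinarith [hroot', hhatpos]
  -- B < hhat
  have hBh : B < hhat := by
    rcases hFh1.lt_or_eq with h | h
    · exact hB _ h1α hhat h
    · exfalso
      have hhalf : F (hhat/2) < 1 - α := by
        have h0 := hFstrict (hhat/2) hhat (by linarith) (by linarith)
        rw [← h] at h0; exact h0
      have hi1 : ∫ x in (0:ℝ)..(hhat/2), F x ≤ (hhat/2) * F (hhat/2) := by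
        have h0 := intervalIntegral.integral_mono_on (by linarith : (0:ℝ) ≤ hhat/2)
          (hFint _ _) (_root_.intervalIntegrable_const (c := F (hhat/2))) (fun x hx => hFmono hx.2)
        simpa using h0
      have hi2 : ∫ x in (hhat/2)..hhat, F x ≤ (hhat - hhat/2) * (1-α) := by
        have h0 := intervalIntegral.integral_mono_on (by linarith : hhat/2 ≤ hhat)
          (hFint _ _) (_root_.intervalIntegrable_const (c := (1-α)))
          (fun x hx => (hFmono hx.2).trans h.symm.le)
        rw [intervalIntegral.integral_const, smul_eq_mul] at h0
        exact h0
      have hsum : (∫ x in (0:ℝ)..(hhat/2), F x) + ∫ x in (hhat/2)..hhat, F x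
          = hhat * (1-α) := by
        rw [← hroot']
        exact integral_add_adjacent_intervals (hFint _ _) (hFint _ _)
      nlinarith [hhalf, hi1, hi2, hsum, hhatpos]
  set x0 : ℝ := (B + hhat)/2 with hx0def
  have hx0B : B < x0 := by rw [hx0def]; linarith
  have hx0h : x0 < hhat := by rw [hx0def]; linarith
  have hx0pos : 0 < x0 := hBpos.trans hx0B
  set c := F x0 - (1 - α) with hcdef
  have hcpos : 0 < c := by
    have h0 := hFstrict B x0 hBpos hx0B
    rw [hFB] at h0; rw [hcdef]; linarith
  have hαx0 : α * x0 < lamhat := by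
    have h1 : α * hhat = lamhat := by rw [hhatdef, mul_comm, div_mul_cancel₀ _ hα0.ne']
    have h2 : α * x0 < α * hhat := mul_lt_mul_of_pos_left hx0h hα0
    linarith
  have hevent : ∀ lam ∈ Set.Ioo (α * x0) lamhat, c * Finv (1 - z2 lam) ≤ lamhat - lam := by
    intro lam hlam
    have hlam' : lam ∈ Set.Ioo (0:ℝ) lamhat := ⟨lt_trans (by positivity) hlam.1, hlam.2⟩
    obtain ⟨hbpos, hbB, hBa, hFb, hz1e, hE'⟩ := hmain lam hlam'
    have hz2m := (hz lam hlam').1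
    set b := Finv (1 - z2 lam) with hbd
    set t := lam / α with htd
    have htpos : 0 < t := div_pos hlam'.1 hα0
    have hhx0 : x0 < t := by
      rw [htd, lt_div_iff₀ hα0]
      nlinarith [hlam.1]
    have hbh : b < t := hbB.trans (hx0B.trans hhx0)
    have hth : t < hhat := by
      rw [htd, hhatdef, div_lt_div_iff₀ hα0 hα0]
      nlinarith [hlam.2]
    have hs1 : (∫ x in (0:ℝ)..b, F x) + ∫ x in b..t, F x = ∫ x in (0:ℝ)..t, F x :=
      integral_add_adjacent_intervals (hFint _ _) (hFint _ _)
    have hs2 : (∫ x in b..t, F x) + ∫ x in t..(b+t), F x = ∫ x in b..(b+t), F x :=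
      integral_add_adjacent_intervals (hFint _ _) (hFint _ _)
    have hs3 : (∫ x in (0:ℝ)..t, F x) + ∫ x in t..hhat, F x = ∫ x in (0:ℝ)..hhat, F x :=
      integral_add_adjacent_intervals (hFint _ _) (hFint _ _)
    have hub1 : ∫ x in (0:ℝ)..b, F x ≤ b * (1 - α) := by
      have h0 := intervalIntegral.integral_mono_on hbpos.le (hFint _ _)
        (_root_.intervalIntegrable_const (c := F b)) (fun x hx => hFmono hx.2)
      have h1 : F b ≤ 1 - α := by rw [hFb]; linarith [hz2m.1]
      simp only [intervalIntegral.integral_const, smul_eq_mul, sub_zero] at h0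
      nlinarith [hbpos]
    have hub2 : b * F t ≤ ∫ x in t..(b+t), F x := by
      have h0 := intervalIntegral.integral_mono_on (by linarith : t ≤ b + t)
        (_root_.intervalIntegrable_const (c := F t)) (hFint _ _) (fun x hx => hFmono hx.1)
      simp only [intervalIntegral.integral_const, smul_eq_mul, add_sub_cancel_right] at h0
      linarith
    have hub3 : ∫ x in t..hhat, F x ≤ (hhat - t) * 1 := by
      have h0 := intervalIntegral.integral_mono_on hth.le (hFint _ _)
        (_root_.intervalIntegrable_const (c := (1:ℝ))) (fun x _ => hFle1 x)
      simpa using h0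
    have hFtx0 : F x0 ≤ F t := hFmono hhx0.le
    have e2 : (∫ x in t..(b+t), F x) - (∫ x in (0:ℝ)..b, F x)
        = t*(1-α) - ∫ x in (0:ℝ)..t, F x := by linarith [hs1, hs2, hE']
    have e3 : ∫ x in (0:ℝ)..t, F x = hhat*(1-α) - ∫ x in t..hhat, F x := by
      linarith [hs3, hroot']
    have e4 : c * b ≤ b * F t - b * (1-α) := by nlinarith
    have e5 : c * b ≤ (hhat - t)*α := by nlinarith
    have e6 : (hhat - t)*α = lamhat - lam := by
      rw [htd, hhatdef, sub_mul, div_mul_cancel₀ _ hα0.ne', div_mul_cancel₀ _ hα0.ne']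
    linarith
  have htbB : Tendsto (fun lam => Finv (1 - z2 lam))
      (nhdsWithin lamhat (Set.Iio lamhat)) (nhds 0) := by
    have hIooB2 : Set.Ioo (α * x0) lamhat ∈ nhdsWithin lamhat (Set.Iio lamhat) :=
      Ioo_mem_nhdsLT_of_mem ⟨hαx0, le_refl lamhat⟩
    apply tendsto_of_tendsto_of_tendsto_of_le_of_le'
      (g := fun _ : ℝ => (0:ℝ)) (h := fun lam : ℝ => (lamhat - lam)/c)
    · exact tendsto_const_nhds
    · have h0 : Tendsto (fun lam : ℝ => (lamhat - lam)/c) (nhds lamhat)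
          (nhds ((lamhat - lamhat)/c)) := by
        apply Tendsto.div_const
        exact tendsto_const_nhds.sub tendsto_id
      simp only [sub_self, zero_div] at h0
      exact h0.mono_left nhdsWithin_le_nhds
    · filter_upwards [hIooB] with lam hlam
      exact ((hmain lam hlam).1).le
    · filter_upwards [hIooB2] with lam hlam
      rw [le_div_iff₀ hcpos, mul_comm]
      exact hevent lam hlam
  have hFb0 : Tendsto (fun lam => F (Finv (1 - z2 lam)))
      (nhdsWithin lamhat (Set.Iio lamhat)) (nhds 0) := by
    rw [Metric.tendsto_nhds]
    intro ε hε
    set p := min (ε/2) ((1-α)/2) with hpdef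
    have hpIoo : p ∈ Set.Ioo (0:ℝ) 1 := by
      constructor
      · apply lt_min (by linarith) (by linarith)
      · calc p ≤ (1-α)/2 := min_le_right _ _
          _ < 1 := by linarith
    have hev := htbB.eventually_lt_const (hFinvpos p hpIoo)
    filter_upwards [hev] with lam h1
    rw [Real.dist_eq, sub_zero, abs_of_nonneg (hF0le _)]
    calc F (Finv (1 - z2 lam)) ≤ p := hC p hpIoo _ h1.le
      _ ≤ ε/2 := min_le_left _ _
      _ < ε := by linarith
  have hz2B : Tendsto z2 (nhdsWithin lamhat (Set.Iio lamhat)) (nhds 1) := by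
    have h1 : Tendsto (fun lam => 1 - F (Finv (1 - z2 lam)))
        (nhdsWithin lamhat (Set.Iio lamhat)) (nhds (1 - 0)) := tendsto_const_nhds.sub hFb0
    have h2 : (fun lam => 1 - F (Finv (1 - z2 lam)))
        =ᶠ[nhdsWithin lamhat (Set.Iio lamhat)] z2 := by
      filter_upwards [hIooB] with lam hlam
      rw [(hmain lam hlam).2.2.2.1]
      ring
    have h3 := h1.congr' h2
    rwa [sub_zero] at h3
  have hz1B : Tendsto z1 (nhdsWithin lamhat (Set.Iio lamhat)) (nhds (1 - F hhat)) := by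
    have hdivB : Tendsto (fun lam : ℝ => lam / α)
        (nhdsWithin lamhat (Set.Iio lamhat)) (nhds hhat) := by
      have h0 : Tendsto (fun lam : ℝ => lam / α) (nhds lamhat) (nhds (lamhat/α)) :=
        (tendsto_id).div_const α
      rw [← hhatdef] at h0
      exact h0.mono_left nhdsWithin_le_nhds
    have haB : Tendsto (fun lam => Finv (1 - z2 lam) + lam / α)
        (nhdsWithin lamhat (Set.Iio lamhat)) (nhds hhat) := by
      have h0 := htbB.add hdivB
      rwa [zero_add] at h0
    have hFch : Tendsto (fun lam => F (Finv (1 - z2 lam) + lam / α))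
        (nhdsWithin lamhat (Set.Iio lamhat)) (nhds (F hhat)) :=
      ((hFcont hhat hhatpos).tendsto).comp haB
    have h1 : Tendsto (fun lam => 1 - F (Finv (1 - z2 lam) + lam / α))
        (nhdsWithin lamhat (Set.Iio lamhat)) (nhds (1 - F hhat)) :=
      tendsto_const_nhds.sub hFch
    have h2 : (fun lam => 1 - F (Finv (1 - z2 lam) + lam / α))
        =ᶠ[nhdsWithin lamhat (Set.Iio lamhat)] z1 := by
      filter_upwards [hIooB] with lam hlam
      rw [(hmain lam hlam).2.2.2.2.1]
    exact h1.congr' h2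
  exact ⟨hz1A, hz2A, hz1B, hz2B⟩
end

section
/- For x ∈ (α,1) and z ∈ [0,α], define g(x,z) = φ_λ(x) + F^{-1}(1-x)(z-x) - φ_λ(z), the gap between the tangent line to φ_λ at x and φ_λ at z. Then ∂g/∂x (x,z) = (z-x)·d/dx[F^{-1}(1-x)] > 0 for all z ∈ [0,α], so f(x) = min_{z∈[0,α]} g(x,z) is strictly increasing in x on (α,1). -/
open Set MeasureTheory intervalIntegral Filter
open Topology

/-- for g(x,z) = φ_λ(x) + F⁻¹(1-x)(z-x) - φ_λ(z),
∂g/∂x = (z-x)·d/dx[F⁻¹(1-x)] > 0 for z ∈ [0,α], x ∈ (α,1), so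
f(x) = min_{z∈[0,α]} g(x,z) is strictly increasing on (α,1). -/
theorem stmt_13 (F Finv : ℝ → ℝ) (α lam : ℝ) (hα : α ∈ Set.Ioo (0:ℝ) 1) (hlam : 0 < lam)
    (hFcont : Continuous F) (hFmono : StrictMonoOn F (Set.Ici 0)) (hF0 : F 0 = 0)
    (hFinv : ∀ p ∈ Set.Ioo (0:ℝ) 1, F (Finv p) = p)
    (hFinv' : ∀ x > (0:ℝ), Finv (F x) = x)
    (hmean : IntervalIntegrable (fun y => Finv (1 - y)) MeasureTheory.volume 0 1)
    (φ : ℝ → ℝ)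
    (hφ : ∀ z, φ z = -(∫ y in z..1, Finv (1 - y))
        + lam * ((α - z) / α) * (if z ≤ α then 1 else 0))
    (d : ℝ → ℝ)
    (hd : ∀ x ∈ Set.Ioo α 1, HasDerivAt (fun x => Finv (1 - x)) (d x) x)
    (hd_neg : ∀ x ∈ Set.Ioo α 1, d x < 0)
    (g : ℝ → ℝ → ℝ)
    (hg : ∀ x z, g x z = φ x + Finv (1 - x) * (z - x) - φ z)
    (f : ℝ → ℝ)
    (hf : ∀ x, f x = sInf ((fun z => g x z) '' Set.Icc 0 α) ∧
      ∃ z ∈ Set.Icc (0:ℝ) α, g x z = f x) :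
    (∀ x ∈ Set.Ioo α 1, ∀ z ∈ Set.Icc (0:ℝ) α,
        0 < (z - x) * d x ∧ HasDerivAt (fun x => g x z) ((z - x) * d x) x) ∧
    StrictMonoOn f (Set.Ioo α 1) := by
  have hcont_int : ContinuousOn (fun u => Finv (1 - u)) (Set.Ioo α 1) :=
    fun x hx => (hd x hx).continuousAt.continuousWithinAt
  -- key derivative fact, for all z
  have key : ∀ x ∈ Set.Ioo α 1, ∀ z : ℝ,
      HasDerivAt (fun x => g x z) ((z - x) * d x) x := by
    intro x hx z
    have hII : IntervalIntegrable (fun y => Finv (1 - y)) volume x 1 := by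
      apply hmean.mono_set
      apply Set.uIcc_subset_uIcc
      · exact Set.mem_uIcc.2 (Or.inl ⟨le_of_lt (lt_trans hα.1 hx.1), hx.2.le⟩)
      · exact Set.mem_uIcc.2 (Or.inl ⟨zero_le_one, le_refl 1⟩)
    have hmeasAt : StronglyMeasurableAtFilter (fun y => Finv (1 - y)) (𝓝 x) :=
      hcont_int.stronglyMeasurableAtFilter isOpen_Ioo x hx
    have hψ : HasDerivAt (fun u => ∫ y in u..1, Finv (1 - y)) (-(Finv (1 - x))) x :=
      intervalIntegral.integral_hasDerivAt_left hII hmeasAt (hd x hx).continuousAt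
    have hφx : HasDerivAt φ (Finv (1 - x)) x := by
      have h1 : HasDerivAt (fun u => -(∫ y in u..1, Finv (1 - y))) (Finv (1 - x)) x := by
        have := hψ.neg; rw [neg_neg] at this; exact this
      apply h1.congr_of_eventuallyEq
      filter_upwards [Ioi_mem_nhds hx.1] with u hu
      rw [hφ u, if_neg (not_le.2 hu)]
      ring
    have hlin : HasDerivAt (fun u => Finv (1 - u) * (z - u))
        (d x * (z - x) + Finv (1 - x) * (0 - 1)) x :=
      (hd x hx).mul ((hasDerivAt_const x z).sub (hasDerivAt_id x))
    have h := (hφx.add hlin).sub_const (φ z)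
    have h2 : HasDerivAt (fun u => g u z)
        (Finv (1 - x) + (d x * (z - x) + Finv (1 - x) * (0 - 1))) x := by
      apply h.congr_of_eventuallyEq
      filter_upwards with u
      rw [hg]
      rfl
    convert h2 using 1
    ring
  constructor
  · intro x hx z hz
    refine ⟨?_, key x hx z⟩
    have h1 : z - x < 0 := by linarith [hz.2, hx.1]
    exact mul_pos_of_neg_of_neg h1 (hd_neg x hx)
  · -- continuity of φ on Icc 0 α
    have hIntOn : IntegrableOn (fun y => Finv (1 - y)) (Set.uIcc 0 1) volume := by
      rw [Set.uIcc_of_le zero_le_one]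
      exact (intervalIntegrable_iff_integrableOn_Icc_of_le zero_le_one).mp hmean
    have hprim : ContinuousOn (fun u => ∫ y in u..1, Finv (1 - y)) (Set.uIcc 0 1) :=
      intervalIntegral.continuousOn_primitive_interval_left hIntOn
    have hsub : Set.Icc 0 α ⊆ Set.uIcc (0:ℝ) 1 := by
      rw [Set.uIcc_of_le zero_le_one]
      exact Set.Icc_subset_Icc le_rfl hα.2.le
    have hφcont : ContinuousOn φ (Set.Icc 0 α) := by
      have : ContinuousOn (fun u => -(∫ y in u..1, Finv (1 - y))
          + lam * ((α - u) / α)) (Set.Icc 0 α) := by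
        apply ContinuousOn.add ((hprim.mono hsub).neg)
        fun_prop
      apply this.congr
      intro u hu
      rw [hφ u, if_pos hu.2]
      ring
    have hbdd : ∀ a : ℝ, BddBelow ((fun z => g a z) '' Set.Icc 0 α) := by
      intro a
      have hgc : ContinuousOn (fun z => g a z) (Set.Icc 0 α) := by
        have : ContinuousOn (fun z => φ a + Finv (1 - a) * (z - a) - φ z) (Set.Icc 0 α) := by
          apply ContinuousOn.sub _ hφcont
          fun_prop
        apply this.congr
        intro u _
        simp only [hg]
      exact (isCompact_Icc.image_of_continuousOn hgc).bddBelow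
    intro a ha b hb hab
    obtain ⟨zb, hzb, hgb⟩ := (hf b).2
    have hfa : f a ≤ g a zb := by
      rw [(hf a).1]
      exact csInf_le (hbdd a) ⟨zb, hzb, rfl⟩
    have hIccsub : Set.Icc a b ⊆ Set.Ioo α 1 := Set.Icc_subset_Ioo ha.1 hb.2
    have hmono : StrictMonoOn (fun x => g x zb) (Set.Icc a b) := by
      apply strictMonoOn_of_deriv_pos (convex_Icc a b)
      · intro x hx
        exact (key x (hIccsub hx) zb).continuousAt.continuousWithinAt
      · intro x hx
        rw [interior_Icc] at hx
        have hx' : x ∈ Set.Ioo α 1 := hIccsub (Set.Ioo_subset_Icc_self hx)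
        rw [(key x hx' zb).deriv]
        have h1 : zb - x < 0 := by linarith [hzb.2, hx'.1]
        exact mul_pos_of_neg_of_neg h1 (hd_neg x hx')
    have : g a zb < g b zb :=
      hmono (Set.left_mem_Icc.2 hab.le) (Set.right_mem_Icc.2 hab.le) hab
    calc f a ≤ g a zb := hfa
      _ < g b zb := this
      _ = f b := hgb
end
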